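/- arXiv:0705.4670 — 8 statements merged into one kernel-verified Lean document; each statement's English description precedes it below -/
import Mathlib

section
/- Let b, k : ℝ → ℝ be continuous on [t₀, ∞) with b(t) > 0 for all t ≥ t₀. Suppose there is a constant M with 1/b(t) + k(t) ≥ M for all t ≥ t₀, and that the function E₀(t) = exp(1/b(t) + k(t)) is differentiable and satisfies E₀'(t) ≤ -(E₀(t) - k(t))²/(2 b(t)) for all t ≥ t₀. Then for every C² solution u of u'' + b u' + k u = 0 on [t₀, ∞), the function E(t) = exp(1/b(t)+k(t)) u(t)² + u'(t)² is nonincreasing on [t₀, ∞). -/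
open Set Real MeasureTheory Filter

theorem stmt_0 (t₀ M : ℝ) (b k E' u u' u'' : ℝ → ℝ)
    (hb : ContinuousOn b (Ici t₀)) (hk : ContinuousOn k (Ici t₀))
    (hbpos : ∀ t ≥ t₀, 0 < b t)
    (hM : ∀ t ≥ t₀, M ≤ 1 / b t + k t)
    (hE : ∀ t ≥ t₀, HasDerivAt (fun s => Real.exp (1 / b s + k s)) (E' t) t)
    (hE' : ∀ t ≥ t₀, E' t ≤ -(Real.exp (1 / b t + k t) - k t) ^ 2 / (2 * b t))
    (hu : ∀ t ≥ t₀, HasDerivAt u (u' t) t)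
    (hu' : ∀ t ≥ t₀, HasDerivAt u' (u'' t) t)
    (hu'' : ContinuousOn u'' (Ici t₀))
    (hode : ∀ t ≥ t₀, u'' t + b t * u' t + k t * u t = 0) :
    AntitoneOn (fun t => Real.exp (1 / b t + k t) * u t ^ 2 + u' t ^ 2) (Ici t₀) := by
  set f : ℝ → ℝ := fun t => Real.exp (1 / b t + k t) * u t ^ 2 + u' t ^ 2 with hf
  have hderiv : ∀ t ≥ t₀, HasDerivAt f
      (E' t * u t ^ 2 + Real.exp (1 / b t + k t) * (2 * u t ^ 1 * u' t)
        + 2 * u' t ^ 1 * u'' t) t := by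
    intro t ht
    exact ((hE t ht).mul ((hu t ht).pow 2)).add ((hu' t ht).pow 2)
  apply antitoneOn_of_deriv_nonpos (convex_Ici t₀)
  · intro t ht
    exact ((hderiv t ht).continuousAt).continuousWithinAt
  · intro t ht
    rw [interior_Ici] at ht
    exact ((hderiv t (le_of_lt ht)).differentiableAt).differentiableWithinAt
  · intro t ht
    rw [interior_Ici] at ht
    have ht' : t₀ ≤ t := le_of_lt ht
    rw [(hderiv t ht').deriv]
    have hb' := hbpos t ht'
    have hE'' := hE' t ht'
    have hode' := hode t ht'
    have hsq : 0 ≤ ((Real.exp (1 / b t + k t) - k t) * u t - 2 * b t * u' t) ^ 2 :=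
      sq_nonneg _
    have h2b : 0 < 2 * b t := by linarith
    have key : E' t * u t ^ 2 ≤ -(Real.exp (1 / b t + k t) - k t) ^ 2 / (2 * b t) * u t ^ 2 := by
      have := mul_le_mul_of_nonneg_right hE'' (sq_nonneg (u t))
      linarith
    rw [div_mul_eq_mul_div, le_div_iff₀ h2b] at key
    have huu : u'' t = -(b t * u' t) - k t * u t := by linarith
    rw [huu]
    nlinarith [sq_nonneg (u t), sq_nonneg (u' t), hsq, hb'.le]
end

section
/- Let b, k : ℝ → ℝ be continuous with b(t) > 0, 1/b(t) + k(t) ≥ M, and (d/dt) exp(1/b(t)+k(t)) ≤ -(exp(1/b(t)+k(t)) - k(t))²/(2 b(t)) for all t ≥ t₀. Then the zero solution of u'' + b u' + k u = 0 is stable: for every ε > 0 there exists δ > 0 such that every solution with u(t₀)² + u'(t₀)² < δ² satisfies u(t)² + u'(t)² < ε² for all t ≥ t₀. -/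
open Set Real MeasureTheory Filter

/-- Stability of the zero solution of u'' + b u' + k u = 0 on [t₀, ∞). -/
def IsStableZero (t₀ : ℝ) (b k : ℝ → ℝ) : Prop :=
  ∀ ε > (0 : ℝ), ∃ δ > (0 : ℝ), ∀ u u' u'' : ℝ → ℝ,
    (∀ t ≥ t₀, HasDerivAt u (u' t) t) →
    (∀ t ≥ t₀, HasDerivAt u' (u'' t) t) →
    (∀ t ≥ t₀, u'' t + b t * u' t + k t * u t = 0) →
    u t₀ ^ 2 + u' t₀ ^ 2 < δ ^ 2 →
    ∀ t ≥ t₀, u t ^ 2 + u' t ^ 2 < ε ^ 2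

theorem stmt_1 (t₀ M : ℝ) (b k E' : ℝ → ℝ)
    (hb : ContinuousOn b (Ici t₀)) (hk : ContinuousOn k (Ici t₀))
    (hbpos : ∀ t ≥ t₀, 0 < b t)
    (hM : ∀ t ≥ t₀, M ≤ 1 / b t + k t)
    (hE : ∀ t ≥ t₀, HasDerivAt (fun s => Real.exp (1 / b s + k s)) (E' t) t)
    (hE' : ∀ t ≥ t₀, E' t ≤ -(Real.exp (1 / b t + k t) - k t) ^ 2 / (2 * b t)) :
    IsStableZero t₀ b k := by
  intro ε hε
  set g : ℝ → ℝ := fun s => Real.exp (1 / b s + k s) with hg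
  have hm : (0:ℝ) < min (Real.exp M) 1 := lt_min (Real.exp_pos M) one_pos
  have hC : (0:ℝ) < max (g t₀) 1 := lt_of_lt_of_le one_pos (le_max_right _ _)
  have hr : (0:ℝ) < min (Real.exp M) 1 / max (g t₀) 1 := div_pos hm hC
  refine ⟨ε * Real.sqrt (min (Real.exp M) 1 / max (g t₀) 1),
    by positivity, ?_⟩
  intro u u' u'' hu hu' hode hinit t ht
  set V : ℝ → ℝ := fun s => g s * u s ^ 2 + u' s ^ 2 with hV
  have hVd : ∀ s ≥ t₀, HasDerivAt V
      (E' s * u s ^ 2 + g s * (2 * u s * u' s) + 2 * u' s * u'' s) s := by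
    intro s hs
    have h1 := (hE s hs).mul ((hu s hs).pow 2)
    have h2 := (hu' s hs).pow 2
    convert h1.add h2 using 1
    · rfl
    · rfl
    · rfl
    · simp only [Pi.pow_apply]
      push_cast
      ring
  have key : ∀ s ≥ t₀,
      E' s * u s ^ 2 + g s * (2 * u s * u' s) + 2 * u' s * u'' s ≤ 0 := by
    intro s hs
    have hB := hbpos s hs
    have hEb : E' s ≤ -(g s - k s) ^ 2 / (2 * b s) := hE' s hs
    have hodes := hode s hs
    have hu2 : u'' s = -(b s * u' s + k s * u s) := by linarith
    rw [le_div_iff₀ (by positivity : (0:ℝ) < 2 * b s)] at hEb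
    have hmul := mul_le_mul_of_nonneg_right hEb (sq_nonneg (u s))
    have h2BT : 2 * b s *
        (E' s * u s ^ 2 + g s * (2 * u s * u' s) + 2 * u' s * u'' s) ≤ 0 := by
      rw [hu2]
      nlinarith [sq_nonneg ((g s - k s) * u s - 2 * b s * u' s), hmul]
    exact le_of_mul_le_mul_left
      (by linarith : 2 * b s *
        (E' s * u s ^ 2 + g s * (2 * u s * u' s) + 2 * u' s * u'' s)
        ≤ 2 * b s * 0) (by positivity)
  have hanti : AntitoneOn V (Ici t₀) := by
    apply antitoneOn_of_deriv_nonpos (convex_Ici t₀)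
    · intro s hs
      exact ((hVd s hs).continuousAt).continuousWithinAt
    · intro s hs
      rw [interior_Ici] at hs
      exact ((hVd s (le_of_lt hs)).differentiableAt).differentiableWithinAt
    · intro s hs
      rw [interior_Ici] at hs
      rw [(hVd s (le_of_lt hs)).deriv]
      exact key s (le_of_lt hs)
  have hVle : V t ≤ V t₀ := hanti self_mem_Ici ht ht
  have hgt : Real.exp M ≤ g t := Real.exp_le_exp.mpr (hM t ht)
  have hlow : min (Real.exp M) 1 * (u t ^ 2 + u' t ^ 2) ≤ V t := by
    have h1 : min (Real.exp M) 1 ≤ g t := le_trans (min_le_left _ _) hgt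
    have h2 : min (Real.exp M) 1 ≤ 1 := min_le_right _ _
    simp only [hV]
    nlinarith [sq_nonneg (u t), sq_nonneg (u' t)]
  have hhigh : V t₀ ≤ max (g t₀) 1 * (u t₀ ^ 2 + u' t₀ ^ 2) := by
    have h1 : g t₀ ≤ max (g t₀) 1 := le_max_left _ _
    have h2 : (1:ℝ) ≤ max (g t₀) 1 := le_max_right _ _
    simp only [hV]
    nlinarith [sq_nonneg (u t₀), sq_nonneg (u' t₀)]
  have hδsq : (ε * Real.sqrt (min (Real.exp M) 1 / max (g t₀) 1)) ^ 2
      = ε ^ 2 * (min (Real.exp M) 1 / max (g t₀) 1) := by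
    rw [mul_pow, Real.sq_sqrt (le_of_lt hr)]
  rw [hδsq] at hinit
  have hinit2 : max (g t₀) 1 * (u t₀ ^ 2 + u' t₀ ^ 2)
      < min (Real.exp M) 1 * ε ^ 2 := by
    have := mul_lt_mul_of_pos_left hinit hC
    calc max (g t₀) 1 * (u t₀ ^ 2 + u' t₀ ^ 2)
        < max (g t₀) 1 * (ε ^ 2 * (min (Real.exp M) 1 / max (g t₀) 1)) := this
      _ = min (Real.exp M) 1 * ε ^ 2 := by
          field_simp
  have : min (Real.exp M) 1 * (u t ^ 2 + u' t ^ 2)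
      < min (Real.exp M) 1 * ε ^ 2 := by linarith
  exact lt_of_mul_lt_mul_left this (le_of_lt hm) |>.trans_le (le_refl _)
end

section
/- Suppose k(t) ≤ 0 for all t ≥ t₀ and ∫_{t₀}^∞ exp(-∫_{t₀}^s b(τ) dτ) ds = ∞. Then every C² solution u of u'' + b u' + k u = 0 with u(t₀) > 0 and u'(t₀) > 0 satisfies u(t) ≥ u(t₀) + u'(t₀) ∫_{t₀}^t exp(-∫_{t₀}^s b) ds for all t ≥ t₀; in particular u is unbounded and the zero solution is unstable. -/
open Set Real MeasureTheory Filter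

theorem stmt_4 (t₀ : ℝ) (b k u u' u'' : ℝ → ℝ)
    (hb : ContinuousOn b (Ici t₀)) (hkc : ContinuousOn k (Ici t₀))
    (hk : ∀ t ≥ t₀, k t ≤ 0)
    (hdiv : Tendsto (fun t => ∫ s in t₀..t, Real.exp (-∫ τ in t₀..s, b τ)) atTop atTop)
    (hu : ∀ t ≥ t₀, HasDerivAt u (u' t) t)
    (hu' : ∀ t ≥ t₀, HasDerivAt u' (u'' t) t)
    (hu'' : ContinuousOn u'' (Ici t₀))
    (hode : ∀ t ≥ t₀, u'' t + b t * u' t + k t * u t = 0)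
    (hu0 : 0 < u t₀) (hu1 : 0 < u' t₀) :
    (∀ t ≥ t₀, u t₀ + u' t₀ * ∫ s in t₀..t, Real.exp (-∫ τ in t₀..s, b τ) ≤ u t)
    ∧ ¬ BddAbove (u '' Ici t₀)
    ∧ ¬ IsStableZero t₀ b k := by
  -- continuous extension of b
  set bb : ℝ → ℝ := fun t => b (max t t₀) with hbb_def
  have hmaxc : Continuous fun x : ℝ => max x t₀ := by fun_prop
  have hbbc : Continuous bb := by
    apply hb.comp_continuous hmaxc
    intro x; exact mem_Ici.mpr (le_max_right x t₀)
  have hbbeq : ∀ s, t₀ ≤ s → bb s = b s := by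
    intro s hs; simp only [hbb_def, max_eq_left hs]
  set B : ℝ → ℝ := fun s => ∫ τ in t₀..s, bb τ with hB_def
  have hB : ∀ s, HasDerivAt B (bb s) s := fun s =>
    (hbbc.integral_hasStrictDerivAt t₀ s).hasDerivAt
  have hBcont : Continuous B := by
    have : Differentiable ℝ B := fun s => (hB s).differentiableAt
    exact this.continuous
  have hBt₀ : B t₀ = 0 := intervalIntegral.integral_same
  have hBint : ∀ s, t₀ ≤ s → B s = ∫ τ in t₀..s, b τ := by
    intro s hs
    apply intervalIntegral.integral_congr
    intro τ hτ
    rw [uIcc_of_le hs] at hτ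
    exact hbbeq τ hτ.1
  -- integrating factor
  set w : ℝ → ℝ := fun s => u' s * Real.exp (B s) with hw_def
  have hw : ∀ s, t₀ ≤ s → HasDerivAt w (-(k s) * u s * Real.exp (B s)) s := by
    intro s hs
    have h1 : HasDerivAt (fun x => Real.exp (B x)) (Real.exp (B s) * bb s) s := (hB s).exp
    have h2 := (hu' s hs).mul h1
    refine h2.congr_deriv ?_
    rw [hbbeq s hs]
    linear_combination (Real.exp (B s)) * hode s hs
  have hwt₀ : w t₀ = u' t₀ := by simp [hw_def, hBt₀]
  -- positivity of u' on [t₀, ∞)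
  have keyA : ∀ t, t₀ ≤ t → 0 < u' t := by
    by_contra hcon
    push_neg at hcon
    obtain ⟨t1, ht1, ht1'⟩ := hcon
    set A : Set ℝ := {t | t₀ ≤ t ∧ u' t ≤ 0} with hA_def
    have hAne : A.Nonempty := ⟨t1, ht1, ht1'⟩
    have hAbdd : BddBelow A := ⟨t₀, fun x hx => hx.1⟩
    set T := sInf A with hT_def
    have hTge : t₀ ≤ T := le_csInf hAne (fun x hx => hx.1)
    have hTcont : ContinuousAt u' T := (hu' T hTge).continuousAt
    have hTle : u' T ≤ 0 := by
      by_contra hpos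
      push_neg at hpos
      have hev : ∀ᶠ y in nhds T, 0 < u' y := hTcont.preimage_mem_nhds (Ioi_mem_nhds hpos)
      rw [Metric.eventually_nhds_iff] at hev
      obtain ⟨ε, hε, hball⟩ := hev
      obtain ⟨a, haA, halt⟩ := exists_lt_of_csInf_lt hAne (show sInf A < T + ε by
        rw [← hT_def]; linarith)
      have haT : T ≤ a := csInf_le hAbdd haA
      have : 0 < u' a := hball (by rw [Real.dist_eq, abs_of_nonneg (by linarith)]; linarith)
      linarith [haA.2]
    have hTgt : t₀ < T := by
      rcases lt_or_eq_of_le hTge with h | h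
      · exact h
      · exfalso; rw [← h] at hTle; linarith
    have hIco : ∀ s ∈ Ico t₀ T, 0 < u' s := by
      intro s hs
      by_contra hneg
      push_neg at hneg
      have : s ∈ A := ⟨hs.1, hneg⟩
      have := csInf_le hAbdd this
      linarith [hs.2]
    have hucont : ContinuousOn u (Icc t₀ T) := fun x hx =>
      (hu x hx.1).continuousAt.continuousWithinAt
    have humono : MonotoneOn u (Icc t₀ T) := by
      apply monotoneOn_of_deriv_nonneg (convex_Icc _ _) hucont
      · intro x hx
        rw [interior_Icc] at hx
        exact (hu x hx.1.le).differentiableAt.differentiableWithinAt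
      · intro x hx
        rw [interior_Icc] at hx
        rw [(hu x hx.1.le).deriv]
        exact (hIco x ⟨hx.1.le, hx.2⟩).le
    have hupos : ∀ s ∈ Icc t₀ T, 0 < u s := by
      intro s hs
      have := humono (left_mem_Icc.2 hTge) hs hs.1
      linarith
    have hwcont : ContinuousOn w (Icc t₀ T) := fun x hx =>
      (hw x hx.1).continuousAt.continuousWithinAt
    have hwmono : MonotoneOn w (Icc t₀ T) := by
      apply monotoneOn_of_deriv_nonneg (convex_Icc _ _) hwcont
      · intro x hx
        rw [interior_Icc] at hx
        exact (hw x hx.1.le).differentiableAt.differentiableWithinAt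
      · intro x hx
        rw [interior_Icc] at hx
        rw [(hw x hx.1.le).deriv]
        have h1 := hk x hx.1.le
        have h2 := hupos x ⟨hx.1.le, hx.2.le⟩
        have h3 := Real.exp_pos (B x)
        have : 0 ≤ -(k x) := by linarith
        exact mul_nonneg (mul_nonneg this h2.le) h3.le
    have h1 : w t₀ ≤ w T := hwmono (left_mem_Icc.2 hTge) (right_mem_Icc.2 hTge) hTge
    have h2 : w T ≤ 0 := mul_nonpos_of_nonpos_of_nonneg hTle (Real.exp_pos _).le
    rw [hwt₀] at h1
    linarith
  -- global monotonicity facts on Ici t₀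
  have hIciInt : interior (Ici t₀) = Ioi t₀ := interior_Ici
  have humono : MonotoneOn u (Ici t₀) := by
    apply monotoneOn_of_deriv_nonneg (convex_Ici _)
      (fun x hx => (hu x hx).continuousAt.continuousWithinAt)
    · intro x hx
      rw [hIciInt] at hx
      exact (hu x (le_of_lt hx)).differentiableAt.differentiableWithinAt
    · intro x hx
      rw [hIciInt] at hx
      rw [(hu x (le_of_lt hx)).deriv]
      exact (keyA x (le_of_lt hx)).le
  have hupos : ∀ s, t₀ ≤ s → 0 < u s := by
    intro s hs
    have := humono self_mem_Ici hs hs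
    linarith
  have hwmono : MonotoneOn w (Ici t₀) := by
    apply monotoneOn_of_deriv_nonneg (convex_Ici _)
      (fun x hx => (hw x hx).continuousAt.continuousWithinAt)
    · intro x hx
      rw [hIciInt] at hx
      exact (hw x (le_of_lt hx)).differentiableAt.differentiableWithinAt
    · intro x hx
      rw [hIciInt] at hx
      rw [(hw x (le_of_lt hx)).deriv]
      have h1 := hk x (le_of_lt hx)
      have h2 := hupos x (le_of_lt hx)
      exact mul_nonneg (mul_nonneg (by linarith) h2.le) (Real.exp_pos _).le
  have hu'ge : ∀ s, t₀ ≤ s → u' t₀ * Real.exp (-(B s)) ≤ u' s := by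
    intro s hs
    have h1 : w t₀ ≤ w s := hwmono self_mem_Ici hs hs
    rw [hwt₀] at h1
    have he := Real.exp_pos (B s)
    rw [Real.exp_neg, ← div_eq_mul_inv, div_le_iff₀ he]
    exact h1
  -- the comparison function
  have hEcont : Continuous fun s => Real.exp (-(B s)) := Real.continuous_exp.comp hBcont.neg
  set g : ℝ → ℝ := fun t => u t - u' t₀ * ∫ s in t₀..t, Real.exp (-(B s)) with hg_def
  have hgderiv : ∀ t, t₀ ≤ t → HasDerivAt g (u' t - u' t₀ * Real.exp (-(B t))) t := by
    intro t ht
    exact (hu t ht).sub (((hEcont.integral_hasStrictDerivAt t₀ t).hasDerivAt).const_mul (u' t₀))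
  have hgmono : MonotoneOn g (Ici t₀) := by
    apply monotoneOn_of_deriv_nonneg (convex_Ici _)
      (fun x hx => (hgderiv x hx).continuousAt.continuousWithinAt)
    · intro x hx
      rw [hIciInt] at hx
      exact (hgderiv x (le_of_lt hx)).differentiableAt.differentiableWithinAt
    · intro x hx
      rw [hIciInt] at hx
      rw [(hgderiv x (le_of_lt hx)).deriv]
      have := hu'ge x (le_of_lt hx)
      linarith
  have hgt₀ : g t₀ = u t₀ := by simp [hg_def]
  have part1 : ∀ t ≥ t₀, u t₀ + u' t₀ * ∫ s in t₀..t, Real.exp (-∫ τ in t₀..s, b τ) ≤ u t := by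
    intro t ht
    have h1 : g t₀ ≤ g t := hgmono self_mem_Ici ht ht
    rw [hgt₀] at h1
    have heq : (∫ s in t₀..t, Real.exp (-∫ τ in t₀..s, b τ))
        = ∫ s in t₀..t, Real.exp (-(B s)) := by
      apply intervalIntegral.integral_congr
      intro s hs
      rw [uIcc_of_le ht] at hs
      show Real.exp (-∫ τ in t₀..s, b τ) = Real.exp (-(B s))
      rw [hBint s hs.1]
    rw [heq]
    simp only [hg_def] at h1
    linarith
  refine ⟨part1, ?_, ?_⟩
  · rintro ⟨M, hM⟩
    have hM' : ∀ t, t₀ ≤ t → u t ≤ M := fun t ht => hM (mem_image_of_mem u ht)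
    obtain ⟨t, hht⟩ := ((hdiv.eventually_ge_atTop ((M - u t₀) / u' t₀ + 1)).and
      (eventually_ge_atTop t₀)).exists
    have h1 := part1 t hht.2
    have h2 := hM' t hht.2
    have h3 := mul_le_mul_of_nonneg_left hht.1 hu1.le
    have hexp : u' t₀ * ((M - u t₀) / u' t₀ + 1) = M - u t₀ + u' t₀ := by
      field_simp
    linarith
  · intro hst
    obtain ⟨δ, hδ, hprop⟩ := hst 1 one_pos
    set S := u t₀ ^ 2 + u' t₀ ^ 2 with hS
    have hSpos : 0 < S := by nlinarith [sq_nonneg (u' t₀)]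
    have hsq : 0 < Real.sqrt S := Real.sqrt_pos.2 hSpos
    set c := δ / (2 * Real.sqrt S) with hc
    have hcpos : 0 < c := by positivity
    have happ := hprop (fun t => c * u t) (fun t => c * u' t) (fun t => c * u'' t)
      (fun t ht => (hu t ht).const_mul c) (fun t ht => (hu' t ht).const_mul c)
      (fun t ht => by simpa using by linear_combination c * hode t ht)
      (by
        show (c * u t₀) ^ 2 + (c * u' t₀) ^ 2 < δ ^ 2
        have h1 : (c * u t₀) ^ 2 + (c * u' t₀) ^ 2 = c ^ 2 * S := by rw [hS]; ring
        have h2 : c ^ 2 * S = δ ^ 2 / 4 := by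
          rw [hc, div_pow, mul_pow, Real.sq_sqrt hSpos.le]
          field_simp
          ring
        rw [h1, h2]
        nlinarith)
    obtain ⟨t, hht⟩ := ((hdiv.eventually_ge_atTop (1 / (c * u' t₀))).and
      (eventually_ge_atTop t₀)).exists
    have h1 := part1 t hht.2
    have hb1 := happ t hht.2
    simp only [one_pow] at hb1
    have h3 := mul_le_mul_of_nonneg_left hht.1 hu1.le
    have hexp : u' t₀ * (1 / (c * u' t₀)) = 1 / c := by
      field_simp
    have hut : 1 / c ≤ u t := by linarith
    have hc1 : 1 ≤ c * u t := by
      rw [div_le_iff₀ hcpos] at hut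
      linarith [hut]
    nlinarith [sq_nonneg (c * u' t), hc1]
end

section
/- Let b, k be continuous on [t₀, ∞) satisfying: (i) ∫_{t₀}^∞ e^{-∫_{t₀}^s b} ds < ∞; (ii) e^{-∫_{t₀}^s b} < 2 for all s ≥ t₀; (iii) ∫_{t₀}^∞ e^{-∫_{t₀}^s b} ∫_{t₀}^s |k(τ)| e^{∫_{t₀}^τ b} dτ ds < 1/2; (iv) e^{-∫_{t₀}^s b} ∫_{t₀}^s |k(τ)| e^{∫_{t₀}^τ b} dτ < 1/2 for all s ≥ t₀. Then the zero solution of u'' + b u' + k u = 0 is stable. -/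
open Set Real MeasureTheory Filter

private lemma primitive_hasDerivAt {f : ℝ → ℝ} (hf : Continuous f) (a t : ℝ) :
    HasDerivAt (fun s => ∫ x in a..s, f x) (f t) t :=
  intervalIntegral.integral_hasDerivAt_right (hf.intervalIntegrable a t)
    (hf.stronglyMeasurableAtFilter _ _) hf.continuousAt

private lemma primitive_continuous {f : ℝ → ℝ} (hf : Continuous f) (a : ℝ) :
    Continuous fun s => ∫ x in a..s, f x :=
  continuous_iff_continuousAt.2 fun t => (primitive_hasDerivAt hf a t).continuousAt

private lemma interval_le_Ici {f : ℝ → ℝ} {a z : ℝ} (hz : a ≤ z)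
    (hf : IntegrableOn f (Ici a)) (hpos : ∀ x ∈ Ici a, 0 ≤ f x) :
    ∫ x in a..z, f x ≤ ∫ x in Ici a, f x := by
  rw [intervalIntegral.integral_of_le hz]
  exact setIntegral_mono_set hf
    ((ae_restrict_iff' measurableSet_Ici).2 (ae_of_all _ hpos))
    (HasSubset.Subset.eventuallyLE (Ioc_subset_Ioi_self.trans Ioi_subset_Ici_self))

set_option maxHeartbeats 1000000 in
theorem stmt_8 (t₀ : ℝ) (b k : ℝ → ℝ)
    (hb : ContinuousOn b (Ici t₀)) (hk : ContinuousOn k (Ici t₀))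
    (hfix1 : IntegrableOn (fun s => Real.exp (-∫ τ in t₀..s, b τ)) (Ici t₀))
    (hfix2 : ∀ s ≥ t₀, Real.exp (-∫ τ in t₀..s, b τ) < 2)
    (hfix3int : IntegrableOn (fun s => Real.exp (-∫ τ in t₀..s, b τ)
        * ∫ τ in t₀..s, |k τ| * Real.exp (∫ x in t₀..τ, b x)) (Ici t₀))
    (hfix3 : ∫ s in Ici t₀, Real.exp (-∫ τ in t₀..s, b τ)
        * ∫ τ in t₀..s, |k τ| * Real.exp (∫ x in t₀..τ, b x) < 1 / 2)
    (hfix4 : ∀ s ≥ t₀, Real.exp (-∫ τ in t₀..s, b τ)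
        * ∫ τ in t₀..s, |k τ| * Real.exp (∫ x in t₀..τ, b x) < 1 / 2) :
    IsStableZero t₀ b k := by
  classical
  intro ε hε
  -- extended (continuous on ℝ) versions of the coefficients
  set bb : ℝ → ℝ := fun t => b (max t t₀) with hbbdef
  set kk : ℝ → ℝ := fun t => k (max t t₀) with hkkdef
  have hmax : Continuous fun t : ℝ => max t t₀ := continuous_id.max continuous_const
  have hbb : Continuous bb := hb.comp_continuous hmax fun x => mem_Ici.2 (le_max_right _ _)
  have hkk : Continuous kk := hk.comp_continuous hmax fun x => mem_Ici.2 (le_max_right _ _)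
  have hbbeq : ∀ x, t₀ ≤ x → bb x = b x := fun x hx => by
    simp only [hbbdef]; rw [max_eq_left hx]
  have hkkeq : ∀ x, t₀ ≤ x → kk x = k x := fun x hx => by
    simp only [hkkdef]; rw [max_eq_left hx]
  set B : ℝ → ℝ := fun t => ∫ τ in t₀..t, bb τ with hBdef
  have hB : ∀ t, HasDerivAt B (bb t) t := primitive_hasDerivAt hbb t₀
  have hBc : Continuous B := primitive_continuous hbb t₀
  have hBeq : ∀ s, t₀ ≤ s → B s = ∫ τ in t₀..s, b τ := by
    intro s hs
    refine intervalIntegral.integral_congr fun τ hτ => ?_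
    rw [uIcc_of_le hs] at hτ
    exact hbbeq τ hτ.1
  set g : ℝ → ℝ := fun s => ∫ τ in t₀..s, |kk τ| * Real.exp (B τ) with hgdef
  have hgc : Continuous g := primitive_continuous (hkk.abs.mul (Real.continuous_exp.comp hBc)) t₀
  have hgeq : ∀ s, t₀ ≤ s →
      g s = ∫ τ in t₀..s, |k τ| * Real.exp (∫ x in t₀..τ, b x) := by
    intro s hs
    refine intervalIntegral.integral_congr fun τ hτ => ?_
    rw [uIcc_of_le hs] at hτ
    rw [hkkeq τ hτ.1, hBeq τ hτ.1]
  have hg0 : ∀ s, t₀ ≤ s → 0 ≤ g s := fun s hs =>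
    intervalIntegral.integral_nonneg hs fun τ _ => mul_nonneg (abs_nonneg _) (Real.exp_pos _).le
  set F : ℝ → ℝ := fun s => Real.exp (-B s) with hFdef
  have hFc : Continuous F := Real.continuous_exp.comp hBc.neg
  have hF0 : ∀ s, 0 ≤ F s := fun s => (Real.exp_pos _).le
  have hFeq : ∀ s, t₀ ≤ s → F s = Real.exp (-∫ τ in t₀..s, b τ) := fun s hs => by
    simp only [hFdef]; rw [hBeq s hs]
  have hFint : IntegrableOn F (Ici t₀) :=
    hfix1.congr_fun (fun s hs => (hFeq s hs).symm) measurableSet_Ici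
  have hFgint : IntegrableOn (fun s => F s * g s) (Ici t₀) :=
    hfix3int.congr_fun (fun s hs => by rw [hFeq s hs, hgeq s hs]) measurableSet_Ici
  set C : ℝ := ∫ s in Ici t₀, F s with hCdef
  have hC0 : 0 ≤ C := setIntegral_nonneg measurableSet_Ici fun s _ => hF0 s
  set q : ℝ := ∫ s in Ici t₀, F s * g s with hqdef
  have hq : q < 1 / 2 := by
    have : q = ∫ s in Ici t₀, Real.exp (-∫ τ in t₀..s, b τ)
        * ∫ τ in t₀..s, |k τ| * Real.exp (∫ x in t₀..τ, b x) :=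
      setIntegral_congr_fun measurableSet_Ici fun s hs => by rw [hFeq s hs, hgeq s hs]
    rw [this]; exact hfix3
  have hq0 : 0 ≤ q := setIntegral_nonneg measurableSet_Ici fun s hs =>
    mul_nonneg (hF0 s) (hg0 s hs)
  have hF2 : ∀ s, t₀ ≤ s → F s < 2 := fun s hs => by rw [hFeq s hs]; exact hfix2 s hs
  have hFg4 : ∀ s, t₀ ≤ s → F s * g s < 1 / 2 := fun s hs => by
    rw [hFeq s hs, hgeq s hs]; exact hfix4 s hs
  -- the choice of δ
  refine ⟨ε / (3 * C + 6), div_pos hε (by linarith), ?_⟩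
  set δ : ℝ := ε / (3 * C + 6) with hδdef
  have hδ0 : 0 < δ := div_pos hε (by linarith)
  have hεδ : ε = (3 * C + 6) * δ := by
    rw [hδdef]; field_simp
  intro u u' u'' hu hu' hode hinit
  have hu0 : |u t₀| < δ := by
    nlinarith [sq_abs (u t₀), sq_abs (u' t₀), abs_nonneg (u t₀), abs_nonneg (u' t₀), sq_nonneg (u' t₀)]
  have hu'0 : |u' t₀| < δ := by
    nlinarith [sq_abs (u t₀), sq_abs (u' t₀), abs_nonneg (u t₀), abs_nonneg (u' t₀), sq_nonneg (u t₀)]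
  -- continuity of u, u' on Ici t₀ (in fact ContinuousAt at each point)
  have hucont : ∀ x, t₀ ≤ x → ContinuousAt u x := fun x hx => (hu x hx).continuousAt
  have hu'cont : ∀ x, t₀ ≤ x → ContinuousAt u' x := fun x hx => (hu' x hx).continuousAt
  -- extended version of u
  set uu : ℝ → ℝ := fun t => u (max t t₀) with huudef
  have hucOn : ContinuousOn u (Ici t₀) := fun x hx => (hucont x hx).continuousWithinAt
  have huu : Continuous uu := hucOn.comp_continuous hmax fun x => mem_Ici.2 (le_max_right _ _)
  have huueq : ∀ x, t₀ ≤ x → uu x = u x := fun x hx => by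
    simp only [huudef]; rw [max_eq_left hx]
  -- integral equation for u'
  have hu'f : ∀ s, t₀ ≤ s →
      u' s * Real.exp (B s) = u' t₀ + ∫ τ in t₀..s, -(kk τ * uu τ) * Real.exp (B τ) := by
    intro s hs
    have hFTC : ∫ τ in t₀..s, -(kk τ * uu τ) * Real.exp (B τ)
        = u' s * Real.exp (B s) - u' t₀ * Real.exp (B t₀) := by
      refine intervalIntegral.integral_eq_sub_of_hasDerivAt
        (f := fun y => u' y * Real.exp (B y))
        (f' := fun τ => -(kk τ * uu τ) * Real.exp (B τ)) (fun x hx => ?_) ?_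
      · rw [uIcc_of_le hs] at hx
        have hx0 : t₀ ≤ x := hx.1
        have h1 : HasDerivAt (fun y => u' y * Real.exp (B y))
            (u'' x * Real.exp (B x) + u' x * (Real.exp (B x) * bb x)) x :=
          (hu' x hx0).mul ((hB x).exp)
        have hode' := hode x hx0
        have h2 : -(kk x * uu x) * Real.exp (B x)
            = u'' x * Real.exp (B x) + u' x * (Real.exp (B x) * bb x) := by
          rw [hkkeq x hx0, huueq x hx0, hbbeq x hx0]
          linear_combination (-Real.exp (B x)) * hode'
        show HasDerivAt (fun y => u' y * Real.exp (B y)) (-(kk x * uu x) * Real.exp (B x)) x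
        rw [h2]; exact h1
      · exact (((hkk.mul huu).neg.mul (Real.continuous_exp.comp hBc)).intervalIntegrable _ _)
    have hB0 : B t₀ = 0 := intervalIntegral.integral_same
    rw [hB0, Real.exp_zero, mul_one] at hFTC
    linarith [hFTC]
  -- bound for |u'|
  set h : ℝ → ℝ := fun s => ∫ τ in t₀..s, |kk τ| * Real.exp (B τ) * |uu τ| with hhdef
  have hhc : Continuous h :=
    primitive_continuous ((hkk.abs.mul (Real.continuous_exp.comp hBc)).mul huu.abs) t₀
  have hu'b : ∀ s, t₀ ≤ s → |u' s| ≤ (|u' t₀| + h s) * F s := by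
    intro s hs
    have habs : |∫ τ in t₀..s, -(kk τ * uu τ) * Real.exp (B τ)| ≤ h s := by
      refine (intervalIntegral.abs_integral_le_integral_abs hs).trans_eq ?_
      simp only [hhdef]
      refine intervalIntegral.integral_congr fun τ _ => ?_
      rw [abs_mul, abs_neg, abs_mul, Real.abs_exp]; ring
    have h1 : |u' s * Real.exp (B s)| ≤ |u' t₀| + h s := by
      rw [hu'f s hs]
      calc |u' t₀ + ∫ τ in t₀..s, -(kk τ * uu τ) * Real.exp (B τ)|
          ≤ |u' t₀| + |∫ τ in t₀..s, -(kk τ * uu τ) * Real.exp (B τ)| := abs_add_le _ _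
        _ ≤ |u' t₀| + h s := by linarith [habs]
    have h2 : |u' s| = |u' s * Real.exp (B s)| * F s := by
      rw [abs_mul, Real.abs_exp, hFdef, mul_assoc, ← Real.exp_add, add_neg_cancel,
        Real.exp_zero, mul_one]
    rw [h2]
    exact mul_le_mul_of_nonneg_right h1 (hF0 s)
  -- integral equation for u
  have huf : ∀ s, t₀ ≤ s → u s = u t₀ + ∫ x in t₀..s, u' x := by
    intro s hs
    have hFTC : ∫ x in t₀..s, u' x = u s - u t₀ := by
      refine intervalIntegral.integral_eq_sub_of_hasDerivAt (fun x hx => ?_) ?_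
      · rw [uIcc_of_le hs] at hx; exact hu x hx.1
      · refine ContinuousOn.intervalIntegrable ?_
        rw [uIcc_of_le hs]
        exact fun x hx => (hu'cont x hx.1).continuousWithinAt
    linarith [hFTC]
  -- the key global bound
  have key : ∀ T, t₀ ≤ T → ∀ x ∈ Icc t₀ T, |u x| ≤ 2 * (|u t₀| + C * |u' t₀|) := by
    intro T hT
    obtain ⟨z, hz, hzmax⟩ := isCompact_Icc.exists_isMaxOn (nonempty_Icc.2 hT)
      (fun x hx => ((hucont x hx.1).continuousWithinAt).abs)
    set M : ℝ := |u z| with hMdef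
    have hM0 : 0 ≤ M := abs_nonneg _
    have hbnd : ∀ x ∈ Icc t₀ T, |u x| ≤ M := fun x hx => hzmax hx
    have hMle : M ≤ |u t₀| + C * |u' t₀| + q * M := by
      have hz0 : t₀ ≤ z := hz.1
      -- pointwise bound on [t₀, z]
      have hpw : ∀ s ∈ Icc t₀ z, |u' s| ≤ |u' t₀| * F s + M * (F s * g s) := by
        intro s hsmem
        have hs0 : t₀ ≤ s := hsmem.1
        have hhle : h s ≤ M * g s := by
          have : M * g s = ∫ τ in t₀..s, M * (|kk τ| * Real.exp (B τ)) := by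
            rw [← intervalIntegral.integral_const_mul]
          rw [this]
          refine intervalIntegral.integral_mono_on hs0 ?_ ?_ fun τ hτ => ?_
          · exact (((hkk.abs.mul (Real.continuous_exp.comp hBc)).mul huu.abs).intervalIntegrable _ _)
          · exact ((continuous_const.mul (hkk.abs.mul (Real.continuous_exp.comp hBc))).intervalIntegrable _ _)
          · have hτT : τ ∈ Icc t₀ T := ⟨hτ.1, hτ.2.trans (hsmem.2.trans hz.2)⟩
            have : |uu τ| ≤ M := by rw [huueq τ hτ.1]; exact hbnd τ hτT
            calc |kk τ| * Real.exp (B τ) * |uu τ|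
                ≤ |kk τ| * Real.exp (B τ) * M := by
                  exact mul_le_mul_of_nonneg_left this
                    (mul_nonneg (abs_nonneg _) (Real.exp_pos _).le)
              _ = M * (|kk τ| * Real.exp (B τ)) := by ring
        calc |u' s| ≤ (|u' t₀| + h s) * F s := hu'b s hs0
          _ ≤ (|u' t₀| + M * g s) * F s := by
              exact mul_le_mul_of_nonneg_right (by linarith) (hF0 s)
          _ = |u' t₀| * F s + M * (F s * g s) := by ring
      have hint1 : ∫ x in t₀..z, |u' x| ≤ ∫ s in t₀..z, (|u' t₀| * F s + M * (F s * g s)) := by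
        refine intervalIntegral.integral_mono_on hz0 ?_ ?_ hpw
        · refine ContinuousOn.intervalIntegrable ?_
          rw [uIcc_of_le hz0]
          exact fun x hx => ((hu'cont x hx.1).continuousWithinAt).abs
        · exact (((continuous_const.mul hFc).add
            (continuous_const.mul (hFc.mul hgc)))).intervalIntegrable _ _
      have hint2 : ∫ s in t₀..z, (|u' t₀| * F s + M * (F s * g s))
          = (|u' t₀| * ∫ s in t₀..z, F s) + M * ∫ s in t₀..z, F s * g s := by
        rw [intervalIntegral.integral_add (f := fun s => |u' t₀| * F s) (g := fun s => M * (F s * g s))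
          ((continuous_const.mul hFc).intervalIntegrable _ _)
          ((continuous_const.mul (hFc.mul hgc)).intervalIntegrable _ _),
          intervalIntegral.integral_const_mul, intervalIntegral.integral_const_mul]
      have hFle : ∫ s in t₀..z, F s ≤ C :=
        interval_le_Ici hz0 hFint fun x _ => hF0 x
      have hFgle : ∫ s in t₀..z, F s * g s ≤ q :=
        interval_le_Ici hz0 hFgint fun x hx => mul_nonneg (hF0 x) (hg0 x hx)
      have habs2 : M ≤ |u t₀| + ∫ x in t₀..z, |u' x| := by
        rw [hMdef, huf z hz0]
        refine (abs_add_le _ _).trans ?_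
        gcongr
        exact intervalIntegral.abs_integral_le_integral_abs hz0
      have hFnn : 0 ≤ ∫ s in t₀..z, F s :=
        intervalIntegral.integral_nonneg hz0 fun x _ => hF0 x
      have hFgnn : 0 ≤ ∫ s in t₀..z, F s * g s :=
        intervalIntegral.integral_nonneg hz0 fun x hx => mul_nonneg (hF0 x) (hg0 x hx.1)
      have hthis : M ≤ |u t₀| + ((|u' t₀| * ∫ s in t₀..z, F s) + M * ∫ s in t₀..z, F s * g s) := by
        rw [← hint2]; linarith
      have hb1 : |u' t₀| * (∫ s in t₀..z, F s) ≤ |u' t₀| * C :=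
        mul_le_mul_of_nonneg_left hFle (abs_nonneg _)
      have hb2 : M * (∫ s in t₀..z, F s * g s) ≤ M * q :=
        mul_le_mul_of_nonneg_left hFgle hM0
      nlinarith [hb1, hb2]
    have hMfinal : M ≤ 2 * (|u t₀| + C * |u' t₀|) := by nlinarith
    exact fun x hx => (hbnd x hx).trans hMfinal
  -- conclusion
  intro t ht
  set A : ℝ := |u t₀| + C * |u' t₀| with hAdef
  have hA0 : 0 ≤ A := add_nonneg (abs_nonneg _) (mul_nonneg hC0 (abs_nonneg _))
  have hut : |u t| ≤ 2 * A := key t ht t ⟨ht, le_rfl⟩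
  have hht : h t ≤ 2 * A * g t := by
    have : 2 * A * g t = ∫ τ in t₀..t, 2 * A * (|kk τ| * Real.exp (B τ)) := by
      rw [← intervalIntegral.integral_const_mul]
    rw [this]
    refine intervalIntegral.integral_mono_on ht ?_ ?_ fun τ hτ => ?_
    · exact (((hkk.abs.mul (Real.continuous_exp.comp hBc)).mul huu.abs).intervalIntegrable _ _)
    · exact ((continuous_const.mul (hkk.abs.mul (Real.continuous_exp.comp hBc))).intervalIntegrable _ _)
    · have : |uu τ| ≤ 2 * A := by
        rw [huueq τ hτ.1]; exact key t ht τ hτ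
      calc |kk τ| * Real.exp (B τ) * |uu τ|
          ≤ |kk τ| * Real.exp (B τ) * (2 * A) :=
            mul_le_mul_of_nonneg_left this (mul_nonneg (abs_nonneg _) (Real.exp_pos _).le)
        _ = 2 * A * (|kk τ| * Real.exp (B τ)) := by ring
  have hu't : |u' t| ≤ 2 * |u' t₀| + A := by
    have h1 : |u' t| ≤ (|u' t₀| + h t) * F t := hu'b t ht
    have h2 : (|u' t₀| + h t) * F t ≤ (|u' t₀| + 2 * A * g t) * F t :=
      mul_le_mul_of_nonneg_right (by linarith) (hF0 t)
    have h3 : (|u' t₀| + 2 * A * g t) * F t = |u' t₀| * F t + 2 * A * (F t * g t) := by ring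
    have h4 : |u' t₀| * F t ≤ |u' t₀| * 2 :=
      mul_le_mul_of_nonneg_left (hF2 t ht).le (abs_nonneg _)
    have h5 : 2 * A * (F t * g t) ≤ 2 * A * (1 / 2) :=
      mul_le_mul_of_nonneg_left (hFg4 t ht).le (by linarith)
    calc |u' t| ≤ (|u' t₀| + 2 * A * g t) * F t := h1.trans h2
      _ = |u' t₀| * F t + 2 * A * (F t * g t) := h3
      _ ≤ |u' t₀| * 2 + 2 * A * (1 / 2) := add_le_add h4 h5
      _ = 2 * |u' t₀| + A := by ring
  have hAlt : A < (1 + C) * δ := by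
    have hc := mul_le_mul_of_nonneg_left hu'0.le hC0
    nlinarith [hc]
  have h1 : |u t| < 2 * (1 + C) * δ := by nlinarith
  have h2 : |u' t| < (3 + C) * δ := by nlinarith
  have hsq1 : u t ^ 2 < (2 * (1 + C) * δ) ^ 2 := by
    nlinarith [sq_abs (u t), abs_nonneg (u t)]
  have hsq2 : u' t ^ 2 < ((3 + C) * δ) ^ 2 := by
    nlinarith [sq_abs (u' t), abs_nonneg (u' t)]
  rw [hεδ]
  nlinarith [sq_nonneg (C * δ), sq_nonneg δ, mul_nonneg (mul_nonneg hC0 hC0) (sq_nonneg δ),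
    mul_nonneg hC0 (sq_nonneg δ)]
end

section
/- For every ε > 0 there exist continuous functions b(t) = 4/(t+α) and k(t) = -1/(t+α)³ with α = max(1, √(5/ε)) such that the zero solution of u'' + b u' + k u = 0 is stable, while the eigenvalues λ±(t) = (-b(t) ± √(b(t)² - 4k(t)))/2 of the associated matrix satisfy |dλ±/dt| < ε for all t ≥ 0. -/
open Set Real MeasureTheory Filter

/-- α(ε) = max(1, √(5/ε)). -/
noncomputable def alp (ε : ℝ) : ℝ := max 1 (Real.sqrt (5 / ε))

noncomputable def bfun (ε t : ℝ) : ℝ := 4 / (t + alp ε)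

noncomputable def kfun (ε t : ℝ) : ℝ := -1 / (t + alp ε) ^ 3

/-- Eigenvalues λ± of the matrix [[0,1],[-k,-b]]. -/
noncomputable def lamP (ε t : ℝ) : ℝ :=
  (-bfun ε t + Real.sqrt (bfun ε t ^ 2 - 4 * kfun ε t)) / 2

noncomputable def lamM (ε t : ℝ) : ℝ :=
  (-bfun ε t - Real.sqrt (bfun ε t ^ 2 - 4 * kfun ε t)) / 2

lemma alp_sq (ε : ℝ) (hε : 0 < ε) : 5 ≤ ε * alp ε ^ 2 := by
  have h0 : (0:ℝ) ≤ 5 / ε := by positivity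
  have h1 : Real.sqrt (5 / ε) ≤ alp ε := le_max_right _ _
  have h2 : Real.sqrt (5 / ε) ^ 2 = 5 / ε := Real.sq_sqrt h0
  have h3 : 5 / ε ≤ alp ε ^ 2 := by nlinarith [Real.sqrt_nonneg (5/ε)]
  rw [div_le_iff₀ hε] at h3
  nlinarith

set_option maxHeartbeats 1000000 in
lemma stable_aux (ε : ℝ) (hε : 0 < ε) : IsStableZero 0 (bfun ε) (kfun ε) := by
  intro e he
  have hα1 : 1 ≤ alp ε := le_max_left _ _
  have hα0 : 0 < alp ε := by linarith
  refine ⟨e / (39 * alp ε), by positivity, ?_⟩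
  intro u u' u'' hu hu' heq hinit t ht
  set z : ℝ → ℝ := fun x => (x + alp ε) * u' x with hzdef
  set V : ℝ → ℝ := fun x => u x ^ 2 + 2 / 3 * u x * z x + z x ^ 2 with hVdef
  set G : ℝ → ℝ := fun x => V x * Real.exp (6 / (x + alp ε)) with hGdef
  have hps : ∀ x : ℝ, 0 ≤ x → (0:ℝ) < x + alp ε := fun x hx => by linarith
  -- derivative of G at every x ≥ 0
  have hGd : ∀ x : ℝ, 0 ≤ x → HasDerivAt G
      ((2 * u x ^ (2 - 1) * u' x
        + ((2 / 3 * u' x) * z x + (2 / 3 * u x) * (1 * u' x + (x + alp ε) * u'' x))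
        + 2 * z x ^ (2 - 1) * (1 * u' x + (x + alp ε) * u'' x)) * Real.exp (6 / (x + alp ε))
        + V x * (Real.exp (6 / (x + alp ε)) * ((0 * (x + alp ε) - 6 * 1) / (x + alp ε) ^ 2))) x := by
    intro x hx
    have h1 : HasDerivAt (fun y : ℝ => y + alp ε) 1 x := (hasDerivAt_id x).add_const _
    have hzd : HasDerivAt z (1 * u' x + (x + alp ε) * u'' x) x := h1.mul (hu' x hx)
    have hVd : HasDerivAt V
        (2 * u x ^ (2 - 1) * u' x
          + ((2 / 3 * u' x) * z x + (2 / 3 * u x) * (1 * u' x + (x + alp ε) * u'' x))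
          + 2 * z x ^ (2 - 1) * (1 * u' x + (x + alp ε) * u'' x)) x :=
      (((hu x hx).pow 2).add (((hu x hx).const_mul (2/3 : ℝ)).mul hzd)).add (hzd.pow 2)
    have hqd : HasDerivAt (fun y : ℝ => Real.exp (6 / (y + alp ε)))
        (Real.exp (6 / (x + alp ε)) * ((0 * (x + alp ε) - 6 * 1) / (x + alp ε) ^ 2)) x :=
      ((hasDerivAt_const x 6).div h1 (ne_of_gt (hps x hx))).exp
    exact hVd.mul hqd
  -- the derivative is nonpositive
  have hGnonpos : ∀ x : ℝ, 0 ≤ x →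
      (2 * u x ^ (2 - 1) * u' x
        + ((2 / 3 * u' x) * z x + (2 / 3 * u x) * (1 * u' x + (x + alp ε) * u'' x))
        + 2 * z x ^ (2 - 1) * (1 * u' x + (x + alp ε) * u'' x)) * Real.exp (6 / (x + alp ε))
        + V x * (Real.exp (6 / (x + alp ε)) * ((0 * (x + alp ε) - 6 * 1) / (x + alp ε) ^ 2)) ≤ 0 := by
    intro x hx
    have hp : (0:ℝ) < x + alp ε := hps x hx
    have hp1 : (1:ℝ) ≤ x + alp ε := by linarith
    have hU : u'' x = -(4 / (x + alp ε)) * u' x + u x / (x + alp ε) ^ 3 := by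
      have h := heq x hx
      simp only [bfun, kfun] at h
      field_simp at h ⊢
      linarith
    have hzx : z x = (x + alp ε) * u' x := rfl
    have hVx : V x = u x ^ 2 + 2 / 3 * u x * z x + z x ^ 2 := rfl
    have hE : 0 < Real.exp (6 / (x + alp ε)) := Real.exp_pos _
    rw [hU, hzx, hVx, hzx]
    set A := u x
    set W := u' x
    have key : (2 * A ^ (2 - 1) * W
        + ((2 / 3 * W) * ((x + alp ε) * W) + (2 / 3 * A) * (1 * W + (x + alp ε) * (-(4 / (x + alp ε)) * W + A / (x + alp ε) ^ 3)))
        + 2 * ((x + alp ε) * W) ^ (2 - 1) * (1 * W + (x + alp ε) * (-(4 / (x + alp ε)) * W + A / (x + alp ε) ^ 3)))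
        + (A ^ 2 + 2 / 3 * A * ((x + alp ε) * W) + ((x + alp ε) * W) ^ 2) * ((0 * (x + alp ε) - 6 * 1) / (x + alp ε) ^ 2)
        = (-(16/3) * A ^ 2 - 2 * A * W * (x + alp ε) - (16/3) * (x + alp ε) ^ 3 * W ^ 2
            - 6 * (x + alp ε) ^ 2 * W ^ 2) / (x + alp ε) ^ 2 := by
      field_simp
      ring
    have hnum : -(16/3) * A ^ 2 - 2 * A * W * (x + alp ε) - (16/3) * (x + alp ε) ^ 3 * W ^ 2
        - 6 * (x + alp ε) ^ 2 * W ^ 2 ≤ 0 := by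
      nlinarith [sq_nonneg (A + (x + alp ε) * W), sq_nonneg ((x + alp ε) * W),
        mul_nonneg (mul_nonneg (le_of_lt hp) (le_of_lt hp)) (mul_nonneg (le_of_lt hp) (sq_nonneg W)),
        mul_nonneg (le_of_lt hp) (mul_nonneg (le_of_lt hp) (sq_nonneg W)), sq_nonneg A]
    have hfrac : (-(16/3) * A ^ 2 - 2 * A * W * (x + alp ε) - (16/3) * (x + alp ε) ^ 3 * W ^ 2
        - 6 * (x + alp ε) ^ 2 * W ^ 2) / (x + alp ε) ^ 2 ≤ 0 :=
      div_nonpos_of_nonpos_of_nonneg hnum (by positivity)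
    calc (2 * A ^ (2 - 1) * W
        + ((2 / 3 * W) * ((x + alp ε) * W) + (2 / 3 * A) * (1 * W + (x + alp ε) * (-(4 / (x + alp ε)) * W + A / (x + alp ε) ^ 3)))
        + 2 * ((x + alp ε) * W) ^ (2 - 1) * (1 * W + (x + alp ε) * (-(4 / (x + alp ε)) * W + A / (x + alp ε) ^ 3))) * Real.exp (6 / (x + alp ε))
        + (A ^ 2 + 2 / 3 * A * ((x + alp ε) * W) + ((x + alp ε) * W) ^ 2) * (Real.exp (6 / (x + alp ε)) * ((0 * (x + alp ε) - 6 * 1) / (x + alp ε) ^ 2))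
        = ((2 * A ^ (2 - 1) * W
        + ((2 / 3 * W) * ((x + alp ε) * W) + (2 / 3 * A) * (1 * W + (x + alp ε) * (-(4 / (x + alp ε)) * W + A / (x + alp ε) ^ 3)))
        + 2 * ((x + alp ε) * W) ^ (2 - 1) * (1 * W + (x + alp ε) * (-(4 / (x + alp ε)) * W + A / (x + alp ε) ^ 3)))
        + (A ^ 2 + 2 / 3 * A * ((x + alp ε) * W) + ((x + alp ε) * W) ^ 2) * ((0 * (x + alp ε) - 6 * 1) / (x + alp ε) ^ 2)) * Real.exp (6 / (x + alp ε)) := by ring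
      _ ≤ 0 := by
          rw [key]
          exact mul_nonpos_of_nonpos_of_nonneg hfrac (le_of_lt hE)
  -- G is antitone on [0, ∞)
  have hanti : AntitoneOn G (Ici (0:ℝ)) := by
    apply antitoneOn_of_deriv_nonpos (convex_Ici 0)
    · exact fun x hx => ((hGd x hx).continuousAt).continuousWithinAt
    · intro x hx
      rw [interior_Ici] at hx
      exact ((hGd x (le_of_lt hx)).differentiableAt).differentiableWithinAt
    · intro x hx
      rw [interior_Ici] at hx
      rw [(hGd x (le_of_lt hx)).deriv]
      exact hGnonpos x (le_of_lt hx)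
  have hGt : G t ≤ G 0 := hanti self_mem_Ici ht ht
  have hVt0 : 0 ≤ V t := by
    have hVx : V t = u t ^ 2 + 2 / 3 * u t * z t + z t ^ 2 := rfl
    rw [hVx]
    nlinarith [sq_nonneg (u t + z t), sq_nonneg (u t), sq_nonneg (z t)]
  have hV0nonneg : 0 ≤ V 0 := by
    have hVx : V 0 = u 0 ^ 2 + 2 / 3 * u 0 * z 0 + z 0 ^ 2 := rfl
    rw [hVx]
    nlinarith [sq_nonneg (u 0 + z 0), sq_nonneg (u 0), sq_nonneg (z 0)]
  have h1t : V t ≤ G t := by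
    have : (1:ℝ) ≤ Real.exp (6 / (t + alp ε)) := Real.one_le_exp (by positivity)
    exact le_mul_of_one_le_right hVt0 this
  have hG0 : G 0 ≤ V 0 * Real.exp 6 := by
    have hle : Real.exp (6 / (0 + alp ε)) ≤ Real.exp 6 := by
      apply Real.exp_le_exp.mpr
      rw [zero_add, div_le_iff₀ hα0]
      nlinarith
    exact mul_le_mul_of_nonneg_left hle hV0nonneg
  have hexp6 : Real.exp 6 ≤ 729 := by
    have h1 : Real.exp 1 ≤ 2.7182818286 := le_of_lt Real.exp_one_lt_d9
    have h6 : Real.exp 6 = Real.exp 1 ^ 6 := by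
      rw [← Real.exp_nat_mul]; norm_num
    rw [h6]
    calc Real.exp 1 ^ 6 ≤ 2.7182818286 ^ 6 :=
          pow_le_pow_left₀ (le_of_lt (Real.exp_pos 1)) h1 6
      _ ≤ 729 := by norm_num
  have hV0le : V 0 ≤ 4 / 3 * (alp ε) ^ 2 * (u 0 ^ 2 + u' 0 ^ 2) := by
    have hVx : V 0 = u 0 ^ 2 + 2 / 3 * u 0 * z 0 + z 0 ^ 2 := rfl
    have hz0 : z 0 = (0 + alp ε) * u' 0 := rfl
    rw [hVx, hz0, zero_add]
    nlinarith [sq_nonneg (u 0 - alp ε * u' 0), sq_nonneg (u' 0),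
      mul_nonneg (by nlinarith : (0:ℝ) ≤ alp ε ^ 2 - 1) (sq_nonneg (u 0))]
  have h5 : u t ^ 2 + u' t ^ 2 ≤ 3 / 2 * V t := by
    have hVx : V t = u t ^ 2 + 2 / 3 * u t * z t + z t ^ 2 := rfl
    have hzx : z t = (t + alp ε) * u' t := rfl
    have hp1 : (1:ℝ) ≤ t + alp ε := by linarith
    rw [hVx, hzx]
    nlinarith [sq_nonneg (u t + (t + alp ε) * u' t), sq_nonneg (u' t),
      mul_le_mul_of_nonneg_left hp1 (mul_nonneg (by linarith : (0:ℝ) ≤ t + alp ε) (sq_nonneg (u' t)))]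
  have hfin : 1458 * (alp ε) ^ 2 * (e / (39 * alp ε)) ^ 2 = 1458 / 1521 * e ^ 2 := by
    field_simp
    ring
  calc u t ^ 2 + u' t ^ 2 ≤ 3 / 2 * V t := h5
    _ ≤ 3 / 2 * G t := mul_le_mul_of_nonneg_left h1t (by norm_num)
    _ ≤ 3 / 2 * G 0 := mul_le_mul_of_nonneg_left hGt (by norm_num)
    _ ≤ 3 / 2 * (V 0 * Real.exp 6) := mul_le_mul_of_nonneg_left hG0 (by norm_num)
    _ ≤ 3 / 2 * (V 0 * 729) :=
        mul_le_mul_of_nonneg_left (mul_le_mul_of_nonneg_left hexp6 hV0nonneg) (by norm_num)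
    _ ≤ 3 / 2 * (4 / 3 * (alp ε) ^ 2 * (u 0 ^ 2 + u' 0 ^ 2) * 729) :=
        mul_le_mul_of_nonneg_left (mul_le_mul_of_nonneg_right hV0le (by norm_num)) (by norm_num)
    _ = 1458 * (alp ε) ^ 2 * (u 0 ^ 2 + u' 0 ^ 2) := by ring
    _ < 1458 * (alp ε) ^ 2 * (e / (39 * alp ε)) ^ 2 := by
        exact mul_lt_mul_of_pos_left hinit (by positivity)
    _ ≤ e ^ 2 := by rw [hfin]; nlinarith [sq_nonneg e]

set_option maxHeartbeats 1000000 in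
lemma deriv_aux (ε : ℝ) (hε : 0 < ε) (t : ℝ) (ht : 0 ≤ t) :
    |deriv (lamP ε) t| < ε ∧ |deriv (lamM ε) t| < ε := by
  have hα1 : 1 ≤ alp ε := le_max_left _ _
  have hp1 : (1:ℝ) ≤ t + alp ε := by linarith
  have hp : (0:ℝ) < t + alp ε := by linarith
  have hpe : 5 ≤ ε * (t + alp ε) ^ 2 := by
    have h := alp_sq ε hε
    nlinarith [mul_nonneg (mul_nonneg (le_of_lt hε) ht) (by linarith : (0:ℝ) ≤ t + 2 * alp ε)]
  have h1 : HasDerivAt (fun x : ℝ => x + alp ε) 1 t := (hasDerivAt_id t).add_const _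
  have hb : HasDerivAt (fun x : ℝ => 4 / (x + alp ε))
      ((0 * (t + alp ε) - 4 * 1) / (t + alp ε) ^ 2) t :=
    (hasDerivAt_const t 4).div h1 (ne_of_gt hp)
  have hp3 : HasDerivAt (fun x : ℝ => (x + alp ε) ^ 3)
      (↑(3:ℕ) * (t + alp ε) ^ (3 - 1) * 1) t := h1.pow 3
  have hk : HasDerivAt (fun x : ℝ => -1 / (x + alp ε) ^ 3)
      ((0 * (t + alp ε) ^ 3 - (-1) * (↑(3:ℕ) * (t + alp ε) ^ (3 - 1) * 1)) / ((t + alp ε) ^ 3) ^ 2) t :=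
    (hasDerivAt_const t (-1)).div hp3 (by positivity)
  have hg : HasDerivAt (fun x : ℝ => (4 / (x + alp ε)) ^ 2 - 4 * (-1 / (x + alp ε) ^ 3))
      (↑(2:ℕ) * (4 / (t + alp ε)) ^ (2 - 1) * ((0 * (t + alp ε) - 4 * 1) / (t + alp ε) ^ 2)
        - 4 * ((0 * (t + alp ε) ^ 3 - (-1) * (↑(3:ℕ) * (t + alp ε) ^ (3 - 1) * 1)) / ((t + alp ε) ^ 3) ^ 2)) t :=
    (hb.pow 2).sub (hk.const_mul 4)
  have hgval : (4 / (t + alp ε)) ^ 2 - 4 * (-1 / (t + alp ε) ^ 3)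
      = 16 / (t + alp ε) ^ 2 + 4 / (t + alp ε) ^ 3 := by field_simp; ring
  have hgpos : (0:ℝ) < (4 / (t + alp ε)) ^ 2 - 4 * (-1 / (t + alp ε) ^ 3) := by
    rw [hgval]; positivity
  have hsq := hg.sqrt (ne_of_gt hgpos)
  set r := Real.sqrt ((4 / (t + alp ε)) ^ 2 - 4 * (-1 / (t + alp ε) ^ 3)) with hrdef
  -- bounds on r
  have hr_lb : 4 / (t + alp ε) ≤ r := by
    rw [hrdef, Real.le_sqrt (by positivity) (le_of_lt hgpos), hgval, div_pow]
    have h4 : (0:ℝ) ≤ 4 / (t + alp ε) ^ 3 := by positivity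
    norm_num
    linarith
  have hr_ub : r ≤ 5 / (t + alp ε) := by
    rw [hrdef]
    rw [show (5:ℝ) / (t + alp ε) = Real.sqrt ((5 / (t + alp ε)) ^ 2) by
      rw [Real.sqrt_sq (by positivity)]]
    apply Real.sqrt_le_sqrt
    rw [hgval, div_pow]
    rw [div_add_div _ _ (by positivity) (by positivity), div_le_div_iff₀ (by positivity) (by positivity)]
    nlinarith [pow_nonneg (le_of_lt hp) 4, mul_le_mul_of_nonneg_left hp1 (pow_nonneg (le_of_lt hp) 4)]
  have hr_pos : 0 < r := lt_of_lt_of_le (by positivity) hr_lb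
  -- lamP derivative
  have hP : HasDerivAt (lamP ε)
      ((-((0 * (t + alp ε) - 4 * 1) / (t + alp ε) ^ 2)
        + (↑(2:ℕ) * (4 / (t + alp ε)) ^ (2 - 1) * ((0 * (t + alp ε) - 4 * 1) / (t + alp ε) ^ 2)
        - 4 * ((0 * (t + alp ε) ^ 3 - (-1) * (↑(3:ℕ) * (t + alp ε) ^ (3 - 1) * 1)) / ((t + alp ε) ^ 3) ^ 2))
          / (2 * r)) / 2) t := (hb.neg.add hsq).div_const 2
  have hM : HasDerivAt (lamM ε)
      ((-((0 * (t + alp ε) - 4 * 1) / (t + alp ε) ^ 2)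
        - (↑(2:ℕ) * (4 / (t + alp ε)) ^ (2 - 1) * ((0 * (t + alp ε) - 4 * 1) / (t + alp ε) ^ 2)
        - 4 * ((0 * (t + alp ε) ^ 3 - (-1) * (↑(3:ℕ) * (t + alp ε) ^ (3 - 1) * 1)) / ((t + alp ε) ^ 3) ^ 2))
          / (2 * r)) / 2) t := (hb.neg.sub hsq).div_const 2
  -- simplify derivatives
  have hPsimp : (-((0 * (t + alp ε) - 4 * 1) / (t + alp ε) ^ 2)
        + (↑(2:ℕ) * (4 / (t + alp ε)) ^ (2 - 1) * ((0 * (t + alp ε) - 4 * 1) / (t + alp ε) ^ 2)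
        - 4 * ((0 * (t + alp ε) ^ 3 - (-1) * (↑(3:ℕ) * (t + alp ε) ^ (3 - 1) * 1)) / ((t + alp ε) ^ 3) ^ 2))
          / (2 * r)) / 2
      = 2 / (t + alp ε) ^ 2 - ((8 * (t + alp ε) + 3) / (t + alp ε) ^ 4) / r := by
    field_simp
    ring_nf
    field_simp
    ring
  have hMsimp : (-((0 * (t + alp ε) - 4 * 1) / (t + alp ε) ^ 2)
        - (↑(2:ℕ) * (4 / (t + alp ε)) ^ (2 - 1) * ((0 * (t + alp ε) - 4 * 1) / (t + alp ε) ^ 2)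
        - 4 * ((0 * (t + alp ε) ^ 3 - (-1) * (↑(3:ℕ) * (t + alp ε) ^ (3 - 1) * 1)) / ((t + alp ε) ^ 3) ^ 2))
          / (2 * r)) / 2
      = 2 / (t + alp ε) ^ 2 + ((8 * (t + alp ε) + 3) / (t + alp ε) ^ 4) / r := by
    field_simp
    ring_nf
    field_simp
    ring
  -- bound the pieces
  have hb2 : 2 / (t + alp ε) ^ 2 ≤ 2 * ε / 5 := by
    rw [div_le_iff₀ (by positivity)]
    nlinarith
  have hT0 : 0 ≤ ((8 * (t + alp ε) + 3) / (t + alp ε) ^ 4) / r := by positivity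
  have hTub : ((8 * (t + alp ε) + 3) / (t + alp ε) ^ 4) / r ≤ 11 / 20 * ε := by
    have hstep : ((8 * (t + alp ε) + 3) / (t + alp ε) ^ 4) / r
        ≤ ((8 * (t + alp ε) + 3) / (t + alp ε) ^ 4) / (4 / (t + alp ε)) := by
      gcongr <;> positivity
    have heqd : ((8 * (t + alp ε) + 3) / (t + alp ε) ^ 4) / (4 / (t + alp ε))
        = (8 * (t + alp ε) + 3) / (4 * (t + alp ε) ^ 3) := by
      field_simp
    refine le_trans hstep ?_
    rw [heqd, div_le_iff₀ (by positivity)]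
    nlinarith [mul_le_mul_of_nonneg_left hpe (le_of_lt hp)]
  have h2p0 : (0:ℝ) ≤ 2 / (t + alp ε) ^ 2 := by positivity
  constructor
  · rw [hP.deriv, hPsimp, abs_lt]
    constructor
    · linarith
    · linarith
  · rw [hM.deriv, hMsimp, abs_lt]
    constructor
    · linarith
    · linarith

theorem stmt_11 : ∀ ε > (0 : ℝ),
    ContinuousOn (bfun ε) (Ici (0:ℝ)) ∧ ContinuousOn (kfun ε) (Ici (0:ℝ))
    ∧ IsStableZero 0 (bfun ε) (kfun ε)
    ∧ ∀ t ≥ (0 : ℝ), |deriv (lamP ε) t| < ε ∧ |deriv (lamM ε) t| < ε := by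
  intro ε hε
  have hα1 : 1 ≤ alp ε := le_max_left _ _
  have hne : ∀ x ∈ Ici (0:ℝ), x + alp ε ≠ 0 := fun x hx =>
    ne_of_gt (by simp only [mem_Ici] at hx; linarith)
  refine ⟨?_, ?_, stable_aux ε hε, fun t ht => deriv_aux ε hε t ht⟩
  · show ContinuousOn (fun t : ℝ => 4 / (t + alp ε)) (Ici (0:ℝ))
    exact ContinuousOn.div continuousOn_const (by fun_prop) hne
  · show ContinuousOn (fun t : ℝ => -1 / (t + alp ε) ^ 3) (Ici (0:ℝ))
    exact ContinuousOn.div continuousOn_const (by fun_prop)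
      (fun x hx => pow_ne_zero 3 (hne x hx))
end

section
/- Suppose -k(t) ≥ α > 0 and k'(t) + 2 b(t) k(t) ≥ 0 for all t ≥ t₀. Then the zero solution of u'' + b u' + k u = 0 is unstable: there exist solutions with arbitrarily small initial data (u(t₀), u'(t₀)) with -k(t₀)u(t₀)² < u'(t₀)² for which (u(t), u'(t)) does not remain bounded. -/
open Set Real MeasureTheory Filter

lemma exists_global_solution {E : Type*} [NormedAddCommGroup E] [NormedSpace ℝ E]
    [CompleteSpace E] (f : ℝ → E → E) (t₀ : ℝ)
    (hfc : ∀ x, Continuous fun t => f t x)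
    (hsub : ∀ t (p q : E), f t p - f t q = f t (p - q))
    (hbdd : ∀ a c : ℝ, ∃ M : ℝ, 1 ≤ M ∧ ∀ t ∈ Icc a c, ∀ p : E, ‖f t p‖ ≤ M * ‖p‖)
    (x₀ : E) :
    ∃ v : ℝ → E, v t₀ = x₀ ∧ ∀ t ≥ t₀, HasDerivAt v (f t (v t)) t := by
  -- Step 1: solutions on compact intervals with a small left margin
  have main : ∀ T, t₀ < T → ∃ ε : ℝ, 0 < ε ∧ ε ≤ 1 ∧ ∃ v : ℝ → E, v t₀ = x₀ ∧
      ∀ t ∈ Icc (t₀ - ε) T, HasDerivAt v (f t (v t)) t := by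
    intro T hT
    obtain ⟨M, hM1, hMb⟩ := hbdd (t₀ - 1) (T + 1)
    have hM0 : (0:ℝ) < M := lt_of_lt_of_le one_pos hM1
    set B₀ : ℝ := ‖x₀‖ * Real.exp (M * (T + 1 - t₀)) with hB₀def
    have hB₀0 : 0 ≤ B₀ := mul_nonneg (norm_nonneg _) (Real.exp_pos _).le
    have hxB₀ : ‖x₀‖ ≤ B₀ := by
      have h1 : (1:ℝ) ≤ Real.exp (M * (T + 1 - t₀)) :=
        Real.one_le_exp (by nlinarith)
      nlinarith [norm_nonneg x₀]
    set C : ℝ := M * (B₀ + 1) with hCdef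
    have hC1 : 1 ≤ C := by nlinarith
    have hC0 : (0:ℝ) < C := lt_of_lt_of_le one_pos hC1
    set ε : ℝ := min 1 (1 / C) with hεdef
    have hε0 : 0 < ε := lt_min one_pos (by positivity)
    have hε1 : ε ≤ 1 := min_le_left _ _
    have hεC : C * ε ≤ 1 := by
      have h : ε ≤ 1 / C := min_le_right _ _
      calc C * ε ≤ C * (1 / C) := by nlinarith
        _ = 1 := by field_simp
    -- local existence
    have hloc : ∀ c ∈ Icc t₀ T, ∀ x : E, ‖x‖ ≤ B₀ →
        ∃ w : ℝ → E, w c = x ∧ ∀ t ∈ Ioo (c - ε) (c + ε), HasDerivAt w (f t (w t)) t := by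
      intro c hc x hx
      have hsubI : Icc (c - ε) (c + ε) ⊆ Icc (t₀ - 1) (T + 1) := fun t ht =>
        ⟨by linarith [ht.1, hc.1], by linarith [ht.2, hc.2]⟩
      have hpl : IsPicardLindelof f (tmin := c - ε) (tmax := c + ε)
          ⟨c, by constructor <;> linarith⟩ x 1 0 C.toNNReal M.toNNReal := by
        refine ⟨?_, ?_, ?_, ?_⟩
        · intro t ht
          apply LipschitzOnWith.of_dist_le_mul
          intro p _ q _
          rw [dist_eq_norm, dist_eq_norm, hsub]
          have := hMb t (hsubI ht) (p - q)
          calc ‖f t (p - q)‖ ≤ M * ‖p - q‖ := this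
            _ = (M.toNNReal : ℝ) * ‖p - q‖ := by rw [Real.coe_toNNReal _ hM0.le]
        · intro y _; exact (hfc y).continuousOn
        · intro t ht y hy
          have h1 : ‖y - x‖ ≤ 1 := by simpa using mem_closedBall_iff_norm.mp hy
          have h2 : ‖y‖ - ‖x‖ ≤ ‖y - x‖ := norm_sub_norm_le y x
          calc ‖f t y‖ ≤ M * ‖y‖ := hMb t (hsubI ht) y
            _ ≤ M * (B₀ + 1) := by nlinarith
            _ ≤ (C.toNNReal : ℝ) := Real.le_coe_toNNReal _
        · simp only [Real.coe_toNNReal _ hC0.le, NNReal.coe_one, NNReal.coe_zero, sub_zero]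
          rw [add_sub_cancel_left, sub_sub_cancel, max_self]; exact hεC
      obtain ⟨w, hw0, hw⟩ := IsPicardLindelof.exists_eq_forall_mem_Icc_hasDerivWithinAt₀ hpl
      exact ⟨w, hw0, fun t ht =>
        (hw t (Ioo_subset_Icc_self ht)).hasDerivAt (Icc_mem_nhds ht.1 ht.2)⟩
    -- Gronwall a priori bound
    have hgr : ∀ (v : ℝ → E) (s : ℝ), s ∈ Icc t₀ T → v t₀ = x₀ →
        (∀ t ∈ Icc t₀ s, HasDerivAt v (f t (v t)) t) → ‖v s‖ ≤ B₀ := by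
      intro v s hs hv0 hv
      have hcont : ContinuousOn v (Icc t₀ s) := fun t ht =>
        (hv t ht).continuousAt.continuousWithinAt
      have hder : ∀ t ∈ Ico t₀ s, HasDerivWithinAt v (f t (v t)) (Ici t) t := fun t ht =>
        (hv t ⟨ht.1, ht.2.le⟩).hasDerivWithinAt
      have hbound : ∀ t ∈ Ico t₀ s, ‖f t (v t)‖ ≤ M * ‖v t‖ + 0 := by
        intro t ht
        rw [add_zero]
        exact hMb t ⟨by linarith [ht.1], by linarith [ht.2, hs.2]⟩ _
      have h := norm_le_gronwallBound_of_norm_deriv_right_le hcont hder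
        (le_of_eq (by rw [hv0])) hbound s ⟨hs.1, le_refl s⟩
      rw [gronwallBound_ε0] at h
      calc ‖v s‖ ≤ ‖x₀‖ * Real.exp (M * (s - t₀)) := h
        _ ≤ B₀ := by
          apply mul_le_mul_of_nonneg_left _ (norm_nonneg _)
          exact Real.exp_le_exp.mpr (by nlinarith [hs.2])
    -- induction on steps
    have key : ∀ j : ℕ, ∃ v : ℝ → E, v t₀ = x₀ ∧
        ∀ t ∈ Icc (t₀ - ε / 2) (min (t₀ + j * (ε / 2)) T), HasDerivAt v (f t (v t)) t := by
      intro j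
      induction j with
      | zero =>
        obtain ⟨w, hw0, hw⟩ := hloc t₀ ⟨le_refl t₀, hT.le⟩ x₀ hxB₀
        refine ⟨w, hw0, fun t ht => hw t ?_⟩
        have h2 : min (t₀ + (0:ℕ) * (ε / 2)) T = t₀ := by
          norm_num
          exact hT.le
        rw [h2] at ht
        exact ⟨by linarith [ht.1], by linarith [ht.2]⟩
      | succ j ih =>
        obtain ⟨v, hv0, hv⟩ := ih
        set c : ℝ := min (t₀ + j * (ε / 2)) T with hcdef
        have hjnn : (0:ℝ) ≤ (j:ℝ) * (ε / 2) := by positivity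
        have hc0 : t₀ ≤ c := le_min (by linarith) hT.le
        have hcT : c ≤ T := min_le_right _ _
        have htop : min (t₀ + ((j:ℝ) + 1) * (ε / 2)) T ≤ c + ε / 2 := by
          rcases le_total (t₀ + (j:ℝ) * (ε / 2)) T with h | h
          · rw [hcdef, min_eq_left h]
            calc min (t₀ + ((j:ℝ) + 1) * (ε / 2)) T ≤ t₀ + ((j:ℝ) + 1) * (ε / 2) :=
                min_le_left _ _
              _ = (t₀ + (j:ℝ) * (ε / 2)) + ε / 2 := by ring
          · rw [hcdef, min_eq_right h]
            calc min (t₀ + ((j:ℝ) + 1) * (ε / 2)) T ≤ T := min_le_right _ _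
              _ ≤ T + ε / 2 := by linarith
        have hvc : ‖v c‖ ≤ B₀ := hgr v c ⟨hc0, hcT⟩ hv0
          (fun t ht => hv t ⟨by linarith [ht.1], ht.2⟩)
        obtain ⟨w, hwc, hw⟩ := hloc c ⟨hc0, hcT⟩ (v c) hvc
        refine ⟨fun t => if t ≤ c then v t else w t, by simp [hc0, hv0], fun t ht => ?_⟩
        push_cast at ht
        rcases lt_trichotomy t c with hlt | heqc | hgt
        · have hmem : t ∈ Icc (t₀ - ε / 2) c := ⟨ht.1, hlt.le⟩
          have h1 : (fun s => if s ≤ c then v s else w s) =ᶠ[nhds t] v := by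
            filter_upwards [Iio_mem_nhds hlt] with s hs
            exact if_pos hs.le
          have h2 := (hv t hmem).congr_of_eventuallyEq h1
          have h3 : (if t ≤ c then v t else w t) = v t := if_pos hlt.le
          simpa [h3] using h2
        · subst heqc
          have hL : HasDerivWithinAt (fun s => if s ≤ c then v s else w s)
              (f c (v c)) (Iic c) c := by
            refine ((hv c ⟨ht.1, le_rfl⟩).hasDerivWithinAt).congr ?_ (if_pos le_rfl)
            intro s hs; exact if_pos hs
          have hR : HasDerivWithinAt (fun s => if s ≤ c then v s else w s)
              (f c (v c)) (Ici c) c := by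
            have hwt : HasDerivAt w (f c (w c)) c := hw c ⟨by linarith, by linarith⟩
            rw [hwc] at hwt
            refine hwt.hasDerivWithinAt.congr ?_ ?_
            · intro s hs
              rcases eq_or_lt_of_le (mem_Ici.mp hs) with h | h
              · rw [← h]; simp [hwc]
              · exact if_neg (not_le.mpr h)
            · rw [if_pos le_rfl]; exact hwc.symm
          have hu := hL.union hR
          rw [Iic_union_Ici, hasDerivWithinAt_univ] at hu
          simpa using hu
        · have ht2 : t ≤ c + ε / 2 := le_trans ht.2 htop
          have hwt := hw t ⟨by linarith, by linarith⟩
          have h1 : (fun s => if s ≤ c then v s else w s) =ᶠ[nhds t] w := by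
            filter_upwards [Ioi_mem_nhds hgt] with s hs
            exact if_neg (not_le.mpr hs)
          have h2 := hwt.congr_of_eventuallyEq h1
          simpa [if_neg (not_le.mpr hgt)] using h2
    obtain ⟨v, hv0, hv⟩ := key (Nat.ceil ((T - t₀) / (ε / 2)))
    refine ⟨ε / 2, by linarith, by linarith, v, hv0, fun t ht => hv t ?_⟩
    have hle : T ≤ t₀ + (Nat.ceil ((T - t₀) / (ε / 2)) : ℝ) * (ε / 2) := by
      have h1 := Nat.le_ceil ((T - t₀) / (ε / 2))
      have h2 : (T - t₀) / (ε / 2) * (ε / 2) ≤ (Nat.ceil ((T - t₀) / (ε / 2)) : ℝ) * (ε / 2) :=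
        mul_le_mul_of_nonneg_right h1 (by linarith)
      rw [div_mul_cancel₀] at h2
      · linarith
      · positivity
    exact ⟨ht.1, le_min (le_trans ht.2 hle) ht.2⟩
  -- Step 2: choose solutions on [t₀ - εₙ, t₀ + n + 1]
  have hmain : ∀ n : ℕ, ∃ ε : ℝ, 0 < ε ∧ ε ≤ 1 ∧ ∃ v : ℝ → E, v t₀ = x₀ ∧
      ∀ t ∈ Icc (t₀ - ε) (t₀ + n + 1), HasDerivAt v (f t (v t)) t := by
    intro n
    exact main (t₀ + n + 1) (by have := Nat.cast_nonneg (α := ℝ) n; linarith)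
  choose εs hεs0 hεs1 vs hvs0 hvs using hmain
  -- forward uniqueness / consistency
  have consist : ∀ (n m : ℕ) (t : ℝ), t₀ ≤ t → t ≤ t₀ + n + 1 → t ≤ t₀ + m + 1 →
      vs n t = vs m t := by
    intro n m t ht0 htn htm
    set bb : ℝ := min (t₀ + n + 1) (t₀ + m + 1) with hbdef
    have hb0 : t₀ ≤ bb := le_min (by have := Nat.cast_nonneg (α := ℝ) n; linarith)
      (by have := Nat.cast_nonneg (α := ℝ) m; linarith)
    obtain ⟨M, hM1, hMb⟩ := hbdd (t₀ - 1) bb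
    set F : ℝ → E → E := fun s x => f (max (t₀ - 1) (min s bb)) x with hFdef
    have hlip : ∀ s : ℝ, LipschitzOnWith M.toNNReal (F s) univ := by
      intro s
      apply LipschitzOnWith.of_dist_le_mul
      intro p _ q _
      rw [dist_eq_norm, dist_eq_norm]
      have hmem : max (t₀ - 1) (min s bb) ∈ Icc (t₀ - 1) bb :=
        ⟨le_max_left _ _, max_le (by linarith) (min_le_right _ _)⟩
      calc ‖F s p - F s q‖ = ‖f (max (t₀ - 1) (min s bb)) (p - q)‖ := by rw [hFdef, hsub]
        _ ≤ M * ‖p - q‖ := hMb _ hmem _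
        _ = (M.toNNReal : ℝ) * ‖p - q‖ := by rw [Real.coe_toNNReal _ (by linarith)]
    have hFeq : ∀ s ∈ Icc t₀ bb, ∀ x, F s x = f s x := by
      intro s hs x
      simp only [hFdef]
      rw [min_eq_left hs.2, max_eq_right (by linarith [hs.1])]
    have hder : ∀ p : ℕ, bb ≤ t₀ + p + 1 →
        ∀ s ∈ Ico t₀ bb, HasDerivWithinAt (vs p) (F s (vs p s)) (Ici s) s := by
      intro p hp s hs
      rw [hFeq s ⟨hs.1, hs.2.le⟩]
      exact (hvs p s ⟨by linarith [hs.1, hεs0 p], by linarith [hs.2, hp]⟩).hasDerivWithinAt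
    have hcont : ∀ p : ℕ, bb ≤ t₀ + p + 1 → ContinuousOn (vs p) (Icc t₀ bb) := by
      intro p hp s hs
      exact (hvs p s ⟨by linarith [hs.1, hεs0 p], by linarith [hs.2, hp]⟩).continuousAt.continuousWithinAt
    have h := ODE_solution_unique_of_mem_Icc_right (fun s _ => hlip s)
      (hcont n (min_le_left _ _)) (hder n (min_le_left _ _)) (fun _ _ => mem_univ _)
      (hcont m (min_le_right _ _)) (hder m (min_le_right _ _)) (fun _ _ => mem_univ _)
      (by rw [hvs0 n, hvs0 m])
    exact h ⟨ht0, le_min htn htm⟩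
  -- backward consistency to the left of t₀
  have consistL : ∀ (n : ℕ) (t : ℝ), t₀ - min (εs 0) (εs n) ≤ t → t ≤ t₀ →
      vs n t = vs 0 t := by
    intro n t ht1 ht2
    set aa : ℝ := t₀ - min (εs 0) (εs n) with hadef
    have haa1 : t₀ - 1 ≤ aa := by
      have := min_le_left (εs 0) (εs n)
      have := hεs1 0
      simp only [hadef]
      linarith
    obtain ⟨M, hM1, hMb⟩ := hbdd (t₀ - 1) t₀
    set F : ℝ → E → E := fun s x => f (max (t₀ - 1) (min s t₀)) x with hFdef
    have hlip : ∀ s : ℝ, LipschitzOnWith M.toNNReal (F s) univ := by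
      intro s
      apply LipschitzOnWith.of_dist_le_mul
      intro p _ q _
      rw [dist_eq_norm, dist_eq_norm]
      have hmem : max (t₀ - 1) (min s t₀) ∈ Icc (t₀ - 1) t₀ :=
        ⟨le_max_left _ _, max_le (by linarith) (min_le_right _ _)⟩
      calc ‖F s p - F s q‖ = ‖f (max (t₀ - 1) (min s t₀)) (p - q)‖ := by rw [hFdef, hsub]
        _ ≤ M * ‖p - q‖ := hMb _ hmem _
        _ = (M.toNNReal : ℝ) * ‖p - q‖ := by rw [Real.coe_toNNReal _ (by linarith)]
    have hFeq : ∀ s ∈ Icc aa t₀, ∀ x, F s x = f s x := by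
      intro s hs x
      simp only [hFdef]
      rw [min_eq_left hs.2, max_eq_right (by linarith [hs.1])]
    have hder : ∀ p : ℕ, min (εs 0) (εs n) ≤ εs p →
        ∀ s ∈ Ioc aa t₀, HasDerivWithinAt (vs p) (F s (vs p s)) (Iic s) s := by
      intro p hp s hs
      rw [hFeq s ⟨hs.1.le, hs.2⟩]
      refine (hvs p s ⟨?_, ?_⟩).hasDerivWithinAt
      · have := hs.1
        simp only [hadef] at this
        linarith
      · have := Nat.cast_nonneg (α := ℝ) p
        linarith [hs.2]
    have hcont : ∀ p : ℕ, min (εs 0) (εs n) ≤ εs p → ContinuousOn (vs p) (Icc aa t₀) := by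
      intro p hp s hs
      refine ((hvs p s ⟨?_, ?_⟩).continuousAt).continuousWithinAt
      · have := hs.1
        simp only [hadef] at this
        linarith
      · have := Nat.cast_nonneg (α := ℝ) p
        linarith [hs.2]
    have h := ODE_solution_unique_of_mem_Icc_left (fun s _ => hlip s)
      (hcont n (min_le_right _ _)) (hder n (min_le_right _ _)) (fun _ _ => mem_univ _)
      (hcont 0 (min_le_left _ _)) (hder 0 (min_le_left _ _)) (fun _ _ => mem_univ _)
      (by rw [hvs0 n, hvs0 0])
    exact h ⟨ht1, ht2⟩
  -- global solution
  refine ⟨fun t => vs ⌈t - t₀⌉₊ t, ?_, ?_⟩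
  · show vs ⌈t₀ - t₀⌉₊ t₀ = x₀
    rw [sub_self]
    norm_num
    exact hvs0 0
  · intro t ht
    have hln : t - t₀ ≤ (⌈t - t₀⌉₊ : ℝ) := Nat.le_ceil _
    set n := ⌈t - t₀⌉₊ with hn
    have hμ0 : 0 < min (εs 0) (εs n) := lt_min (hεs0 0) (hεs0 n)
    have hU : Ioo (t₀ - min (εs 0) (εs n)) (t₀ + n + 1) ∈ nhds t :=
      Ioo_mem_nhds (by linarith) (by linarith)
    have heq : ∀ s ∈ Ioo (t₀ - min (εs 0) (εs n)) (t₀ + (n:ℝ) + 1),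
        vs ⌈s - t₀⌉₊ s = vs n s := by
      intro s hs
      rcases le_or_gt t₀ s with h | h
      · refine consist _ _ _ h ?_ hs.2.le
        have := Nat.le_ceil (s - t₀)
        linarith
      · have h0 : ⌈s - t₀⌉₊ = 0 := Nat.ceil_eq_zero.mpr (by linarith)
        rw [h0]
        exact (consistL n s hs.1.le h.le).symm
    have hd := hvs n t ⟨by linarith [hεs0 n], by linarith⟩
    have hev : (fun s => vs ⌈s - t₀⌉₊ s) =ᶠ[nhds t] vs n := by
      filter_upwards [hU] with s hs using heq s hs
    have h2 := hd.congr_of_eventuallyEq hev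
    have h3 : vs ⌈t - t₀⌉₊ t = vs n t := by rw [← hn]
    simpa [h3] using h2

theorem stmt_15 (t₀ α : ℝ) (hα : 0 < α) (b k k' : ℝ → ℝ)
    (hb : ContinuousOn b (Ici t₀))
    (hk : ∀ t ≥ t₀, HasDerivAt k (k' t) t)
    (hk'c : ContinuousOn k' (Ici t₀))
    (hkα : ∀ t ≥ t₀, α ≤ -k t)
    (hpos : ∀ t ≥ t₀, 0 ≤ k' t + 2 * b t * k t) :
    (∀ δ > (0 : ℝ), ∃ u u' u'' : ℝ → ℝ,
      (∀ t ≥ t₀, HasDerivAt u (u' t) t)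
      ∧ (∀ t ≥ t₀, HasDerivAt u' (u'' t) t)
      ∧ (∀ t ≥ t₀, u'' t + b t * u' t + k t * u t = 0)
      ∧ u t₀ ^ 2 + u' t₀ ^ 2 < δ ^ 2
      ∧ -k t₀ * u t₀ ^ 2 < u' t₀ ^ 2
      ∧ ¬ ∃ C : ℝ, ∀ t ≥ t₀, u t ^ 2 + u' t ^ 2 ≤ C)
    ∧ ¬ IsStableZero t₀ b k := by
  have hk_cont : ContinuousOn k (Ici t₀) := fun t ht =>
    ((hk t ht).continuousAt).continuousWithinAt
  have hm_cont : Continuous (fun t : ℝ => max t t₀) := continuous_id.max continuous_const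
  have hm_mem : ∀ t : ℝ, max t t₀ ∈ Ici t₀ := fun t => mem_Ici.mpr (le_max_right _ _)
  set B : ℝ → ℝ := fun t => b (max t t₀) with hB
  set K : ℝ → ℝ := fun t => k (max t t₀) with hK
  have hBc : Continuous B := hb.comp_continuous hm_cont hm_mem
  have hKc : Continuous K := hk_cont.comp_continuous hm_cont hm_mem
  have hBt : ∀ t ≥ t₀, B t = b t := fun t ht => by rw [hB]; simp [max_eq_left ht]
  have hKt : ∀ t ≥ t₀, K t = k t := fun t ht => by rw [hK]; simp [max_eq_left ht]
  set f : ℝ → (ℝ × ℝ) → (ℝ × ℝ) := fun t p => (p.2, -B t * p.2 - K t * p.1) with hf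
  have hfc : ∀ x : ℝ × ℝ, Continuous fun t => f t x := by
    intro x
    apply Continuous.prodMk continuous_const
    exact (hBc.neg.mul continuous_const).sub (hKc.mul continuous_const)
  have hsub : ∀ t (p q : ℝ × ℝ), f t p - f t q = f t (p - q) := by
    intro t p q
    simp only [hf, Prod.mk_sub_mk, Prod.fst_sub, Prod.snd_sub, Prod.mk.injEq]
    constructor
    · trivial
    · ring
  have hbdd : ∀ a c : ℝ, ∃ M : ℝ, 1 ≤ M ∧ ∀ t ∈ Icc a c, ∀ p : ℝ × ℝ, ‖f t p‖ ≤ M * ‖p‖ := by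
    intro a c
    obtain ⟨N, hN⟩ := isCompact_Icc.exists_bound_of_continuousOn
      (s := Icc a c) ((hBc.abs.add hKc.abs).continuousOn)
    refine ⟨max 1 N, le_max_left _ _, ?_⟩
    intro t ht p
    have hN1 : |B t| + |K t| ≤ max 1 N := by
      have h := hN t ht
      rw [Real.norm_eq_abs] at h
      calc |B t| + |K t| ≤ |(|B t| + |K t|)| := le_abs_self _
        _ ≤ N := h
        _ ≤ max 1 N := le_max_right _ _
    have hp1 : |p.1| ≤ ‖p‖ := by rw [← Real.norm_eq_abs]; exact norm_fst_le p
    have hp2 : |p.2| ≤ ‖p‖ := by rw [← Real.norm_eq_abs]; exact norm_snd_le p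
    have h1M : (1:ℝ) ≤ max 1 N := le_max_left _ _
    rw [Prod.norm_def]
    apply max_le
    · rw [Real.norm_eq_abs]
      nlinarith [norm_nonneg p]
    · rw [Real.norm_eq_abs]
      calc |(-B t * p.2 - K t * p.1)| ≤ |(-B t * p.2)| + |K t * p.1| := abs_sub _ _
        _ = |B t| * |p.2| + |K t| * |p.1| := by rw [abs_mul, abs_mul, abs_neg]
        _ ≤ (|B t| + |K t|) * ‖p‖ := by
            nlinarith [abs_nonneg (B t), abs_nonneg (K t), norm_nonneg p]
        _ ≤ max 1 N * ‖p‖ := mul_le_mul_of_nonneg_right hN1 (norm_nonneg p)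
  have hkneg : ∀ t ≥ t₀, k t < 0 := fun t ht => by linarith [hkα t ht]
  -- First part
  have part1 : ∀ δ > (0 : ℝ), ∃ u u' u'' : ℝ → ℝ,
      (∀ t ≥ t₀, HasDerivAt u (u' t) t)
      ∧ (∀ t ≥ t₀, HasDerivAt u' (u'' t) t)
      ∧ (∀ t ≥ t₀, u'' t + b t * u' t + k t * u t = 0)
      ∧ u t₀ ^ 2 + u' t₀ ^ 2 < δ ^ 2
      ∧ -k t₀ * u t₀ ^ 2 < u' t₀ ^ 2
      ∧ ¬ ∃ C : ℝ, ∀ t ≥ t₀, u t ^ 2 + u' t ^ 2 ≤ C := by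
    intro δ hδ
    obtain ⟨v, hv0, hv⟩ := exists_global_solution f t₀ hfc hsub hbdd (0, δ / 2)
    set u : ℝ → ℝ := fun t => (v t).1 with hu
    set u' : ℝ → ℝ := fun t => (v t).2 with hu'
    set u'' : ℝ → ℝ := fun t => -B t * (v t).2 - K t * (v t).1 with hu''
    have hu0 : u t₀ = 0 := by rw [hu]; simp [hv0]
    have hu'0 : u' t₀ = δ / 2 := by rw [hu']; simp [hv0]
    have hud : ∀ t ≥ t₀, HasDerivAt u (u' t) t := by
      intro t ht
      exact (hasFDerivAt_fst (𝕜 := ℝ)).comp_hasDerivAt t (hv t ht)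
    have hu'd : ∀ t ≥ t₀, HasDerivAt u' (u'' t) t := by
      intro t ht
      exact (hasFDerivAt_snd (𝕜 := ℝ)).comp_hasDerivAt t (hv t ht)
    have heq : ∀ t ≥ t₀, u'' t + b t * u' t + k t * u t = 0 := by
      intro t ht
      simp only [hu'', hu', hu, hBt t ht, hKt t ht]
      ring
    refine ⟨u, u', u'', hud, hu'd, heq, ?_, ?_, ?_⟩
    · rw [hu0, hu'0]; nlinarith
    · rw [hu0, hu'0]
      have : -k t₀ * 0 ^ 2 = 0 := by ring
      rw [this]
      positivity
    · rintro ⟨C, hC⟩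
      set V : ℝ → ℝ := fun t => u t ^ 2 + u' t ^ 2 / k t with hV
      set c : ℝ := (δ / 2) ^ 2 / (-k t₀) with hc
      have hkt₀ : k t₀ < 0 := hkneg t₀ le_rfl
      have hc0 : 0 < c := by
        rw [hc]
        apply div_pos (by positivity) (by linarith)
      have hVt₀ : V t₀ = -c := by
        rw [hV]
        simp only [hu0, hu'0, hc]
        field_simp
        ring
      have hVd : ∀ t ≥ t₀, HasDerivAt V
          (-(u' t ^ 2 * (k' t + 2 * b t * k t)) / k t ^ 2) t := by
        intro t ht
        have h1 : HasDerivAt (fun s => u s ^ 2) (2 * u t * u' t) t := by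
          have := (hud t ht).fun_pow 2
          simpa [mul_comm, mul_assoc, mul_left_comm] using this
        have h2 : HasDerivAt (fun s => u' s ^ 2) (2 * u' t * u'' t) t := by
          have := (hu'd t ht).fun_pow 2
          simpa [mul_comm, mul_assoc, mul_left_comm] using this
        have h3 : HasDerivAt (fun s => u' s ^ 2 / k s)
            ((2 * u' t * u'' t * k t - u' t ^ 2 * k' t) / k t ^ 2) t :=
          h2.div (hk t ht) (ne_of_lt (hkneg t ht))
        have h4 := h1.fun_add h3
        refine h4.congr_deriv ?_
        have hb0 : u'' t = -b t * u' t - k t * u t := by linarith [heq t ht]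
        rw [hb0]
        have hkne : k t ≠ 0 := ne_of_lt (hkneg t ht)
        field_simp
        ring
      have hVmono : AntitoneOn V (Ici t₀) := by
        apply antitoneOn_of_deriv_nonpos (convex_Ici t₀)
        · intro t ht
          exact (hVd t ht).continuousAt.continuousWithinAt
        · intro t ht
          rw [interior_Ici] at ht
          exact (hVd t ht.le).differentiableAt.differentiableWithinAt
        · intro t ht
          rw [interior_Ici] at ht
          rw [(hVd t ht.le).deriv]
          apply div_nonpos_of_nonpos_of_nonneg
          · apply neg_nonpos.mpr
            exact mul_nonneg (sq_nonneg _) (hpos t ht.le)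
          · positivity
      have hVle : ∀ t ≥ t₀, V t ≤ -c := by
        intro t ht
        have := hVmono (self_mem_Ici) ht ht
        rw [hVt₀] at this
        exact this
      have hsq : ∀ t ≥ t₀, α * c ≤ u' t ^ 2 := by
        intro t ht
        have h1 := hVle t ht
        have hkt := hkneg t ht
        have h3 : u' t ^ 2 / k t ≤ -c - u t ^ 2 := by
          rw [hV] at h1
          simp only at h1
          linarith
        have h4 : u' t ^ 2 = (u' t ^ 2 / k t) * k t := by
          rw [div_mul_cancel₀ _ (ne_of_lt hkt)]
        have h5 : (-c - u t ^ 2) * k t ≤ (u' t ^ 2 / k t) * k t :=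
          mul_le_mul_of_nonpos_right h3 hkt.le
        have h6 := hkα t ht
        nlinarith [sq_nonneg (u t)]
      have hαc : 0 < α * c := mul_pos hα hc0
      have hu'pos : ∀ t ≥ t₀, 0 < u' t := by
        intro t ht
        by_contra hcon
        push_neg at hcon
        have h1 : (0:ℝ) ∈ Icc (u' t) (u' t₀) := ⟨hcon, by rw [hu'0]; positivity⟩
        have hcontu : ContinuousOn u' (Icc t₀ t) := fun s hs =>
          (hu'd s hs.1).continuousAt.continuousWithinAt
        obtain ⟨s, hs, hs0⟩ := intermediate_value_Icc' ht hcontu h1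
        have := hsq s hs.1
        rw [hs0] at this
        nlinarith
      set m₀ : ℝ := Real.sqrt (α * c) with hm₀def
      have hm₀ : 0 < m₀ := Real.sqrt_pos.mpr hαc
      have hu'ge : ∀ t ≥ t₀, m₀ ≤ u' t := by
        intro t ht
        have h1 : m₀ ≤ |u' t| := by
          rw [← Real.sqrt_sq_eq_abs]
          exact Real.sqrt_le_sqrt (hsq t ht)
        rwa [abs_of_pos (hu'pos t ht)] at h1
      have hgrow : ∀ t ≥ t₀, u t₀ + m₀ * (t - t₀) ≤ u t := by
        intro t ht
        have hmono : MonotoneOn (fun s => u s - m₀ * s) (Ici t₀) := by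
          apply monotoneOn_of_deriv_nonneg (convex_Ici t₀)
          · intro s hs
            exact ((hud s hs).sub ((hasDerivAt_id s).const_mul m₀)).continuousAt.continuousWithinAt
          · intro s hs
            rw [interior_Ici] at hs
            exact ((hud s hs.le).sub
              ((hasDerivAt_id s).const_mul m₀)).differentiableAt.differentiableWithinAt
          · intro s hs
            rw [interior_Ici] at hs
            have hd : HasDerivAt (fun s => u s - m₀ * s) (u' s - m₀ * 1) s :=
              (hud s hs.le).sub ((hasDerivAt_id s).const_mul m₀)
            rw [hd.deriv]
            have := hu'ge s hs.le
            linarith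
        have := hmono self_mem_Ici ht ht
        simp only at this
        nlinarith
      set t₁ : ℝ := t₀ + (|u t₀| + |C| + 1) / m₀ with ht₁def
      have hq : 0 ≤ (|u t₀| + |C| + 1) / m₀ := by positivity
      have ht₁ : t₀ ≤ t₁ := by rw [ht₁def]; linarith
      have h1 := hgrow t₁ ht₁
      have h2 : m₀ * (t₁ - t₀) = |u t₀| + |C| + 1 := by
        rw [ht₁def]
        field_simp
        ring
      have h3 : |C| + 1 ≤ u t₁ := by
        nlinarith [neg_abs_le (u t₀)]
      have h4 := hC t₁ ht₁
      nlinarith [sq_nonneg (u' t₁), le_abs_self C, abs_nonneg C, sq_nonneg (u t₁ - 1)]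
  refine ⟨part1, ?_⟩
  intro hstab
  obtain ⟨δ, hδ0, hδ⟩ := hstab 1 one_pos
  obtain ⟨u, u', u'', h1, h2, h3, h4, _, h6⟩ := part1 δ hδ0
  refine h6 ⟨1, fun t ht => ?_⟩
  have := hδ u u' u'' h1 h2 h3 h4 t ht
  nlinarith
end

section
/- Suppose for all t ≥ t₀: -k(t) ≥ α > 0, k'(t) + 2 b(t) k(t) ≤ 0, and there exist α₃ > 0, t₃ ≥ t₀ with -k'(t) - 2 b(t) k(t) ≥ (α₃/t) b(t)² k(t)² for t ≥ t₃. Then the zero solution of u'' + b u' + k u = 0 is unstable. -/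
open Set Real MeasureTheory Filter Topology

namespace Stmt17Aux

/-- The first-order system vector field for `u'' + bb u' + kk u = 0`. -/
noncomputable def fld (bb kk : ℝ → ℝ) : ℝ → ℝ × ℝ → ℝ × ℝ :=
  fun t x => (x.2, -bb t * x.2 - kk t * x.1)

lemma fld_sub (bb kk : ℝ → ℝ) (t : ℝ) (x y : ℝ × ℝ) :
    fld bb kk t x - fld bb kk t y = fld bb kk t (x - y) := by
  simp only [fld]; ext <;> simp <;> ring

lemma norm_prod (x : ℝ × ℝ) : ‖x‖ = max |x.1| |x.2| := by
  simp [Prod.norm_def, Real.norm_eq_abs]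

lemma exists_bound {bb kk : ℝ → ℝ} (hbb : Continuous bb) (hkk : Continuous kk) (a c : ℝ) :
    ∃ M : ℝ, 1 ≤ M ∧ ∀ t ∈ Icc a c, ∀ x : ℝ × ℝ, ‖fld bb kk t x‖ ≤ M * ‖x‖ := by
  obtain ⟨C, hC⟩ := (isCompact_Icc (a := a) (b := c)).exists_bound_of_continuousOn
    ((hbb.prodMk hkk).continuousOn)
  refine ⟨2 * max C 0 + 1, by nlinarith [le_max_right C 0], fun t ht x => ?_⟩
  have hCb : |bb t| ≤ max C 0 := by
    calc |bb t| ≤ ‖(bb t, kk t)‖ := by rw [norm_prod]; exact le_max_left _ _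
    _ ≤ C := hC t ht
    _ ≤ max C 0 := le_max_left _ _
  have hCk : |kk t| ≤ max C 0 := by
    calc |kk t| ≤ ‖(bb t, kk t)‖ := by rw [norm_prod]; exact le_max_right _ _
    _ ≤ C := hC t ht
    _ ≤ max C 0 := le_max_left _ _
  have h1 : |x.1| ≤ ‖x‖ := by rw [norm_prod]; exact le_max_left _ _
  have h2 : |x.2| ≤ ‖x‖ := by rw [norm_prod]; exact le_max_right _ _
  have hxn : 0 ≤ ‖x‖ := norm_nonneg x
  rw [norm_prod]
  have hA : |(fld bb kk t x).1| ≤ (2 * max C 0 + 1) * ‖x‖ := by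
    simp only [fld]
    nlinarith [abs_nonneg (bb t)]
  have hB : |(fld bb kk t x).2| ≤ (2 * max C 0 + 1) * ‖x‖ := by
    simp only [fld]
    calc |-bb t * x.2 - kk t * x.1| ≤ |bb t * x.2| + |kk t * x.1| := by
          rw [neg_mul, show -(bb t * x.2) - kk t * x.1 = -(bb t * x.2 + kk t * x.1) by ring, abs_neg]
          exact abs_add_le _ _
    _ = |bb t| * |x.2| + |kk t| * |x.1| := by rw [abs_mul, abs_mul]
    _ ≤ (2 * max C 0 + 1) * ‖x‖ := by nlinarith [abs_nonneg (bb t), abs_nonneg (kk t), le_max_right C 0]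
  exact max_le hA hB

lemma lipschitz_of_bound {bb kk : ℝ → ℝ} {M : ℝ} (hM : 1 ≤ M) {a c : ℝ}
    (hbd : ∀ t ∈ Icc a c, ∀ x : ℝ × ℝ, ‖fld bb kk t x‖ ≤ M * ‖x‖) :
    ∀ t ∈ Icc a c, LipschitzWith M.toNNReal (fld bb kk t) := by
  intro t ht
  apply LipschitzWith.of_dist_le_mul
  intro x y
  rw [dist_eq_norm, dist_eq_norm, fld_sub]
  have := hbd t ht (x - y)
  rwa [Real.coe_toNNReal _ (by linarith)]


lemma step_exists {bb kk : ℝ → ℝ} (hbb : Continuous bb) (hkk : Continuous kk)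
    {a T M : ℝ} (hM : 1 ≤ M)
    (hbd : ∀ t ∈ Icc a T, ∀ x : ℝ × ℝ, ‖fld bb kk t x‖ ≤ M * ‖x‖)
    {s : ℝ} (hs : s ∈ Icc a T) (x₁ : ℝ × ℝ) :
    ∃ g : ℝ → ℝ × ℝ, g s = x₁ ∧ ∀ t ∈ Icc s (min (s + 1/(2*M)) T),
      HasDerivWithinAt g (fld bb kk t (g t)) (Icc s (min (s + 1/(2*M)) T)) t := by
  have hM0 : (0:ℝ) < M := by linarith
  have hsub : Icc s (min (s + 1/(2*M)) T) ⊆ Icc a T := by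
    apply Icc_subset_Icc hs.1 (min_le_right _ _)
  have hlip := lipschitz_of_bound hM hbd
  have hsI : s ∈ Icc s (min (s + 1/(2*M)) T) := by
    refine ⟨le_rfl, le_min ?_ hs.2⟩
    have : (0:ℝ) < 1/(2*M) := by positivity
    linarith
  have hpl : IsPicardLindelof (fld bb kk) (⟨s, hsI⟩ : Icc s (min (s + 1/(2*M)) T)) x₁
      (‖x₁‖₊ + 1) 0 (M * (2*‖x₁‖ + 1)).toNNReal M.toNNReal := by
    constructor
    · intro t ht
      exact LipschitzWith.lipschitzOnWith (hlip t (hsub ht))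
    · intro x _
      exact (continuous_const.prodMk
        (((hbb.neg.mul continuous_const)).sub (hkk.mul continuous_const))).continuousOn
    · intro t ht x hx
      have h1 : ‖x‖ ≤ 2*‖x₁‖ + 1 := by
        have := norm_sub_norm_le x x₁
        have hd : ‖x - x₁‖ ≤ ‖x₁‖ + 1 := by
          rw [← dist_eq_norm]; have := Metric.mem_closedBall.mp hx; simpa using this
        linarith [norm_nonneg x₁]
      rw [Real.coe_toNNReal _ (by positivity)]
      calc ‖fld bb kk t x‖ ≤ M * ‖x‖ := hbd t (hsub ht) x
        _ ≤ M * (2*‖x₁‖ + 1) := by nlinarith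
    · have h2 : max (min (s + 1/(2*M)) T - s) (s - s) ≤ 1/(2*M) := by
        apply max_le _ (by simp only [sub_self]; positivity)
        have := min_le_left (s + 1/(2*M)) T
        linarith
      rw [Real.coe_toNNReal _ (by positivity)]
      simp only [NNReal.coe_add, coe_nnnorm, NNReal.coe_one, NNReal.coe_zero, sub_zero]
      calc M * (2*‖x₁‖ + 1) * max (min (s + 1/(2*M)) T - s) (s - s)
          ≤ M * (2*‖x₁‖ + 1) * (1/(2*M)) := by
            apply mul_le_mul_of_nonneg_left h2 (by positivity)
        _ = ‖x₁‖ + 1/2 := by field_simp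
        _ ≤ ‖x₁‖ + 1 := by linarith
  obtain ⟨g, hg0, hg⟩ := hpl.exists_eq_forall_mem_Icc_hasDerivWithinAt₀
  exact ⟨g, hg0, hg⟩

lemma glue_sol {F : ℝ → ℝ × ℝ → ℝ × ℝ} {g₁ g₂ : ℝ → ℝ × ℝ} {a s r : ℝ}
    (has : a ≤ s) (hsr : s ≤ r)
    (h₁ : ∀ t ∈ Icc a s, HasDerivWithinAt g₁ (F t (g₁ t)) (Icc a s) t)
    (h₂ : ∀ t ∈ Icc s r, HasDerivWithinAt g₂ (F t (g₂ t)) (Icc s r) t)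
    (heq : g₁ s = g₂ s) :
    ∀ t ∈ Icc a r, HasDerivWithinAt (fun t => if t ≤ s then g₁ t else g₂ t)
      (F t ((fun t => if t ≤ s then g₁ t else g₂ t) t)) (Icc a r) t := by
  set g : ℝ → ℝ × ℝ := fun t => if t ≤ s then g₁ t else g₂ t with hg
  have hEq1 : EqOn g g₁ (Iic s) := fun y hy => by simp [g, mem_Iic.mp hy]
  have hEq2 : EqOn g g₂ (Ici s) := by
    intro y hy
    by_cases hys : y ≤ s
    · have : y = s := le_antisymm hys (mem_Ici.mp hy)
      simp [g, this, heq]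
    · simp [g, hys]
  intro t ht
  rcases lt_trichotomy t s with hts | hts | hts
  · have hmem : Icc a s ∈ 𝓝[Icc a r] t := by
      apply mem_nhdsWithin.mpr
      exact ⟨Iio s, isOpen_Iio, hts, fun y hy => ⟨hy.2.1, le_of_lt hy.1⟩⟩
    have H := (h₁ t ⟨ht.1, le_of_lt hts⟩).mono_of_mem_nhdsWithin hmem
    have Hev : g =ᶠ[𝓝[Icc a r] t] g₁ := by
      filter_upwards [hmem] with y hy using hEq1 (mem_Iic.mpr hy.2)
    have e : g t = g₁ t := hEq1 (mem_Iic.mpr hts.le)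
    have := H.congr_of_eventuallyEq Hev e
    simpa only [e] using this
  · subst hts
    have e1 : g t = g₁ t := hEq1 (mem_Iic.mpr le_rfl)
    have e2 : g t = g₂ t := hEq2 (mem_Ici.mpr le_rfl)
    have H₁ : HasDerivWithinAt g (F t (g t)) (Icc a t) t := by
      rw [e1]
      exact (h₁ t ⟨ht.1, le_rfl⟩).congr (fun y hy => hEq1 (mem_Iic.mpr hy.2)) e1
    have H₂ : HasDerivWithinAt g (F t (g t)) (Icc t r) t := by
      rw [e2]
      exact (h₂ t ⟨le_rfl, hsr⟩).congr (fun y hy => hEq2 (mem_Ici.mpr hy.1)) e2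
    have := H₁.union H₂
    rwa [Icc_union_Icc_eq_Icc ht.1 hsr] at this
  · have hmem : Icc s r ∈ 𝓝[Icc a r] t := by
      apply mem_nhdsWithin.mpr
      exact ⟨Ioi s, isOpen_Ioi, hts, fun y hy => ⟨le_of_lt hy.1, hy.2.2⟩⟩
    have H := (h₂ t ⟨le_of_lt hts, ht.2⟩).mono_of_mem_nhdsWithin hmem
    have Hev : g =ᶠ[𝓝[Icc a r] t] g₂ := by
      filter_upwards [hmem] with y hy using hEq2 (mem_Ici.mpr hy.1)
    have e : g t = g₂ t := hEq2 (mem_Ici.mpr hts.le)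
    have := H.congr_of_eventuallyEq Hev e
    simpa only [e] using this


lemma exists_on_Icc {bb kk : ℝ → ℝ} (hbb : Continuous bb) (hkk : Continuous kk)
    {t0 T : ℝ} (hT : t0 ≤ T) (x₀ : ℝ × ℝ) :
    ∃ g : ℝ → ℝ × ℝ, g t0 = x₀ ∧ ∀ t ∈ Icc t0 T,
      HasDerivWithinAt g (fld bb kk t (g t)) (Icc t0 T) t := by
  obtain ⟨M, hM, hbd⟩ := exists_bound hbb hkk t0 T
  have hM0 : (0:ℝ) < M := by linarith
  have hh0 : (0:ℝ) < 1/(2*M) := by positivity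
  have key : ∀ n : ℕ, ∃ g : ℝ → ℝ × ℝ, g t0 = x₀ ∧
      ∀ t ∈ Icc t0 (min (t0 + ((n:ℝ)+1)*(1/(2*M))) T),
      HasDerivWithinAt g (fld bb kk t (g t)) (Icc t0 (min (t0 + ((n:ℝ)+1)*(1/(2*M))) T)) t := by
    intro n
    induction n with
    | zero =>
      obtain ⟨g, hg0, hg⟩ := step_exists hbb hkk hM hbd (left_mem_Icc.mpr hT) x₀
      refine ⟨g, hg0, ?_⟩
      have e : (((0:ℕ):ℝ) + 1) * (1/(2*M)) = 1/(2*M) := by norm_num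
      rw [e]; exact hg
    | succ n ih =>
      obtain ⟨g₁, hg₁0, hg₁⟩ := ih
      set s : ℝ := min (t0 + ((n:ℝ)+1)*(1/(2*M))) T with hs
      have hsmem : s ∈ Icc t0 T := ⟨le_min (by nlinarith [Nat.cast_nonneg (α := ℝ) n]) hT,
        min_le_right _ _⟩
      obtain ⟨g₂, hg₂0, hg₂⟩ := step_exists hbb hkk hM hbd hsmem (g₁ s)
      set r : ℝ := min (s + 1/(2*M)) T with hr
      have hsr : s ≤ r := le_min (by linarith) hsmem.2
      have hglue := glue_sol hsmem.1 hsr hg₁ hg₂ hg₂0.symm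
      have hnext : min (t0 + ((n:ℝ)+1+1)*(1/(2*M))) T ≤ r := by
        apply le_min _ (min_le_right _ _)
        rcases le_total (t0 + ((n:ℝ)+1)*(1/(2*M))) T with hc | hc
        · have := min_le_left (t0 + ((n:ℝ)+1+1)*(1/(2*M))) T
          rw [hs, min_eq_left hc]; linarith
        · have := min_le_right (t0 + ((n:ℝ)+1+1)*(1/(2*M))) T
          rw [hs, min_eq_right hc]; linarith
      refine ⟨fun t => if t ≤ s then g₁ t else g₂ t, by simp [hg₁0, hsmem.1], ?_⟩
      push_cast
      intro t ht
      have ht' : t ∈ Icc t0 r := ⟨ht.1, le_trans ht.2 hnext⟩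
      exact (hglue t ht').mono (Icc_subset_Icc_right hnext)
  obtain ⟨n, hn⟩ := exists_nat_ge ((T - t0)/(1/(2*M)))
  obtain ⟨g, hg0, hg⟩ := key n
  have : T ≤ t0 + ((n:ℝ)+1)*(1/(2*M)) := by
    rw [div_le_iff₀ hh0] at hn
    nlinarith
  rw [min_eq_right this] at hg
  exact ⟨g, hg0, hg⟩


lemma unique_on {bb kk : ℝ → ℝ} (hbb : Continuous bb) (hkk : Continuous kk)
    {t0 T₁ T₂ : ℝ} (h1 : t0 ≤ T₁) (h2 : t0 ≤ T₂) {g₁ g₂ : ℝ → ℝ × ℝ}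
    (hg₁ : ∀ t ∈ Icc t0 T₁, HasDerivWithinAt g₁ (fld bb kk t (g₁ t)) (Icc t0 T₁) t)
    (hg₂ : ∀ t ∈ Icc t0 T₂, HasDerivWithinAt g₂ (fld bb kk t (g₂ t)) (Icc t0 T₂) t)
    (heq0 : g₁ t0 = g₂ t0) :
    ∀ t ∈ Icc t0 (min T₁ T₂), g₁ t = g₂ t := by
  set Tm := min T₁ T₂ with hTm
  have hTm0 : t0 ≤ Tm := le_min h1 h2
  obtain ⟨M, hM, hbd⟩ := exists_bound hbb hkk t0 Tm
  set v : ℝ → ℝ × ℝ → ℝ × ℝ := fun t x => fld bb kk (min (max t t0) Tm) x with hv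
  have hclamp : ∀ t, min (max t t0) Tm ∈ Icc t0 Tm := fun t =>
    ⟨le_min (le_max_right _ _) hTm0, min_le_right _ _⟩
  have hvlip : ∀ t : ℝ, LipschitzWith M.toNNReal (v t) := fun t =>
    lipschitz_of_bound hM hbd _ (hclamp t)
  have hveq : ∀ t ∈ Icc t0 Tm, ∀ x, v t x = fld bb kk t x := by
    intro t ht x
    rw [hv]
    simp only
    rw [max_eq_left ht.1, min_eq_left ht.2]
  have hc₁ : ContinuousOn g₁ (Icc t0 Tm) := fun t ht =>
    ((hg₁ t ⟨ht.1, le_trans ht.2 (min_le_left _ _)⟩).continuousWithinAt).mono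
      (Icc_subset_Icc_right (min_le_left _ _))
  have hc₂ : ContinuousOn g₂ (Icc t0 Tm) := fun t ht =>
    ((hg₂ t ⟨ht.1, le_trans ht.2 (min_le_right _ _)⟩).continuousWithinAt).mono
      (Icc_subset_Icc_right (min_le_right _ _))
  have hd₁ : ∀ t ∈ Ico t0 Tm, HasDerivWithinAt g₁ (v t (g₁ t)) (Ici t) t := by
    intro t ht
    rw [hveq t ⟨ht.1, ht.2.le⟩]
    exact (hg₁ t ⟨ht.1, le_trans ht.2.le (min_le_left _ _)⟩).mono_of_mem_nhdsWithin
      (Icc_mem_nhdsGE_of_mem ⟨ht.1, lt_of_lt_of_le ht.2 (min_le_left _ _)⟩)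
  have hd₂ : ∀ t ∈ Ico t0 Tm, HasDerivWithinAt g₂ (v t (g₂ t)) (Ici t) t := by
    intro t ht
    rw [hveq t ⟨ht.1, ht.2.le⟩]
    exact (hg₂ t ⟨ht.1, le_trans ht.2.le (min_le_right _ _)⟩).mono_of_mem_nhdsWithin
      (Icc_mem_nhdsGE_of_mem ⟨ht.1, lt_of_lt_of_le ht.2 (min_le_right _ _)⟩)
  exact fun t ht => ODE_solution_unique hvlip hc₁ hd₁ hc₂ hd₂ heq0 ht

lemma exists_global {bb kk : ℝ → ℝ} (hbb : Continuous bb) (hkk : Continuous kk)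
    (t0 : ℝ) (x₀ : ℝ × ℝ) :
    ∃ g : ℝ → ℝ × ℝ, g t0 = x₀ ∧ ∀ t ≥ t0, HasDerivAt g (fld bb kk t (g t)) t := by
  have hex : ∀ T : ℝ, ∃ g : ℝ → ℝ × ℝ, t0 ≤ T → (g t0 = x₀ ∧
      ∀ t ∈ Icc t0 T, HasDerivWithinAt g (fld bb kk t (g t)) (Icc t0 T) t) := by
    intro T
    rcases le_or_gt t0 T with hT | hT
    · obtain ⟨g, hg⟩ := exists_on_Icc hbb hkk hT x₀
      exact ⟨g, fun _ => hg⟩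
    · exact ⟨fun _ => x₀, fun h => absurd h (not_le.mpr hT)⟩
  choose G hG using hex
  have hagree : ∀ T₁ T₂, t0 ≤ T₁ → t0 ≤ T₂ → ∀ t ∈ Icc t0 (min T₁ T₂), G T₁ t = G T₂ t := by
    intro T₁ T₂ h1 h2
    exact unique_on hbb hkk h1 h2 ((hG T₁ h1).2) ((hG T₂ h2).2)
      (((hG T₁ h1).1).trans ((hG T₂ h2).1).symm)
  set glob : ℝ → ℝ × ℝ := fun t =>
    if t < t0 then x₀ + (t - t0) • fld bb kk t0 x₀ else G (t+1) t with hglob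
  have hval : ∀ t T, t0 ≤ t → t ≤ T → glob t = G T t := by
    intro t T ht hT
    have h1 : t0 ≤ t + 1 := by linarith
    have h2 : t0 ≤ T := le_trans ht hT
    rw [hglob]
    simp only [not_lt.mpr ht, if_neg (not_lt.mpr ht)]
    exact hagree (t+1) T h1 h2 t ⟨ht, le_min (by linarith) hT⟩
  have hval0 : glob t0 = x₀ := by
    rw [hval t0 (t0+1) le_rfl (by linarith)]
    exact (hG (t0+1) (by linarith)).1
  refine ⟨glob, hval0, fun t ht => ?_⟩
  rcases eq_or_lt_of_le ht with heq | ht'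
  · -- t = t0 : combine left linear extension and right solution
    subst heq
    have hd : fld bb kk t0 (glob t0) = fld bb kk t0 x₀ := by rw [hval0]
    rw [hd]
    have Hr : HasDerivWithinAt glob (fld bb kk t0 x₀) (Ici t0) t0 := by
      have H := ((hG (t0+1) (by linarith)).2) t0 ⟨le_rfl, by linarith⟩
      have H' : HasDerivWithinAt (G (t0+1)) (fld bb kk t0 (G (t0+1) t0)) (Ici t0) t0 :=
        H.mono_of_mem_nhdsWithin (Icc_mem_nhdsGE_of_mem ⟨le_rfl, by linarith⟩)
      have hGt : G (t0+1) t0 = x₀ := (hG (t0+1) (by linarith)).1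
      rw [hGt] at H'
      apply H'.congr_of_eventuallyEq_of_mem _ (mem_Ici.mpr le_rfl)
      · have hmem : Ico t0 (t0+1) ∈ 𝓝[≥] t0 := Ico_mem_nhdsGE_of_mem ⟨le_rfl, by linarith⟩
        filter_upwards [hmem] with y hy
        exact hval y (t0+1) hy.1 hy.2.le
    have Hl : HasDerivWithinAt glob (fld bb kk t0 x₀) (Iic t0) t0 := by
      have hlin : HasDerivAt (fun s : ℝ => x₀ + (s - t0) • fld bb kk t0 x₀)
          (fld bb kk t0 x₀) t0 := by
        have h1 : HasDerivAt (fun s : ℝ => (s - t0)) 1 t0 := (hasDerivAt_id t0).sub_const t0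
        have h2 := h1.smul_const (fld bb kk t0 x₀)
        simpa using h2.const_add x₀
      apply hlin.hasDerivWithinAt.congr _ (by simp [hval0])
      intro y hy
      rcases lt_or_eq_of_le (mem_Iic.mp hy) with hy' | hy'
      · rw [hglob]; simp only [if_pos hy']
      · subst hy'; simp [hval0]
    have := Hl.union Hr
    rwa [Iic_union_Ici, hasDerivWithinAt_univ] at this
  · -- t0 < t
    have h1 : t0 ≤ t + 1 := by linarith
    have H := ((hG (t+1) h1).2) t ⟨ht, by linarith⟩
    have H' : HasDerivAt (G (t+1)) (fld bb kk t (G (t+1) t)) t :=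
      H.hasDerivAt (Icc_mem_nhds ht' (by linarith))
    have hev : glob =ᶠ[𝓝 t] G (t+1) := by
      have hmem : Ioo t0 (t+1) ∈ 𝓝 t := Ioo_mem_nhds ht' (by linarith)
      filter_upwards [hmem] with y hy
      exact hval y (t+1) hy.1.le hy.2.le
    have Hg := H'.congr_of_eventuallyEq hev
    have hGt : G (t+1) t = glob t := (hval t (t+1) ht (by linarith)).symm
    rwa [hGt] at Hg


lemma exists_solution_system {bb kk : ℝ → ℝ} (hbb : Continuous bb) (hkk : Continuous kk)
    (t0 c : ℝ) :
    ∃ u u' : ℝ → ℝ, u t0 = c ∧ u' t0 = 0 ∧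
      (∀ t ≥ t0, HasDerivAt u (u' t) t) ∧
      (∀ t ≥ t0, HasDerivAt u' (-bb t * u' t - kk t * u t) t) := by
  obtain ⟨g, hg0, hg⟩ := exists_global hbb hkk t0 (c, 0)
  refine ⟨fun t => (g t).1, fun t => (g t).2, by simp [hg0], by simp [hg0], ?_, ?_⟩
  · intro t ht
    have := (ContinuousLinearMap.fst ℝ ℝ ℝ).hasFDerivAt.comp_hasDerivAt t (hg t ht)
    exact this
  · intro t ht
    have := (ContinuousLinearMap.snd ℝ ℝ ℝ).hasFDerivAt.comp_hasDerivAt t (hg t ht)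
    exact this


lemma mono_helper {f f' : ℝ → ℝ} {a b : ℝ} (hab : a ≤ b)
    (hd : ∀ t ∈ Icc a b, HasDerivAt f (f' t) t) (h0 : ∀ t ∈ Ioo a b, 0 ≤ f' t) :
    f a ≤ f b := by
  have hmono := monotoneOn_of_deriv_nonneg (convex_Icc a b)
    (fun t ht => (hd t ht).continuousAt.continuousWithinAt)
    (fun t ht =>
      (hd t (Ioo_subset_Icc_self (by rwa [interior_Icc] at ht))).differentiableAt.differentiableWithinAt)
    (fun t ht => by
      rw [interior_Icc] at ht
      rw [(hd t (Ioo_subset_Icc_self ht)).deriv]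
      exact h0 t ht)
  exact hmono (left_mem_Icc.mpr hab) (right_mem_Icc.mpr hab) hab

end Stmt17Aux

set_option maxHeartbeats 1000000 in
theorem stmt_17 (t₀ α α₃ t₃ : ℝ) (ht₀ : 0 < t₀) (hα : 0 < α) (hα₃ : 0 < α₃)
    (ht₃ : t₃ ≥ t₀) (b k k' : ℝ → ℝ)
    (hb : ContinuousOn b (Ici t₀))
    (hk : ∀ t ≥ t₀, HasDerivAt k (k' t) t)
    (hk'c : ContinuousOn k' (Ici t₀))
    (hkα : ∀ t ≥ t₀, α ≤ -k t)
    (hneg : ∀ t ≥ t₀, k' t + 2 * b t * k t ≤ 0)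
    (hrate : ∀ t ≥ t₃, α₃ / t * b t ^ 2 * k t ^ 2 ≤ -k' t - 2 * b t * k t) :
    ¬ IsStableZero t₀ b k := by
  intro hstab
  obtain ⟨δ, hδ, H⟩ := hstab 1 one_pos
  set c : ℝ := δ/2 with hcdef
  have hc0 : 0 < c := by positivity
  set bb : ℝ → ℝ := fun t => b (max t t₀) with hbbdef
  set kk : ℝ → ℝ := fun t => k (max t t₀) with hkkdef
  have hbbc : Continuous bb :=
    hb.comp_continuous (continuous_id.max continuous_const)
      (fun x => mem_Ici.mpr (le_max_right x t₀))
  have hkc : ContinuousOn k (Ici t₀) := fun t ht => ((hk t ht).continuousAt).continuousWithinAt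
  have hkkc : Continuous kk :=
    hkc.comp_continuous (continuous_id.max continuous_const)
      (fun x => mem_Ici.mpr (le_max_right x t₀))
  obtain ⟨u, u', hu0, hu'0, hud, hu'd⟩ := Stmt17Aux.exists_solution_system hbbc hkkc t₀ c
  have hbbt : ∀ t ≥ t₀, bb t = b t := fun t ht => by rw [hbbdef]; simp [max_eq_left ht]
  have hkkt : ∀ t ≥ t₀, kk t = k t := fun t ht => by rw [hkkdef]; simp [max_eq_left ht]
  have hu'd' : ∀ t ≥ t₀, HasDerivAt u' (-b t * u' t - k t * u t) t := by
    intro t ht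
    have := hu'd t ht
    rwa [hbbt t ht, hkkt t ht] at this
  have hbound : ∀ t ≥ t₀, u t ^ 2 + u' t ^ 2 < 1 := by
    have hB1 := H u u' (fun t => -b t * u' t - k t * u t) hud hu'd'
      (fun t ht => by ring) (by rw [hu0, hu'0]; nlinarith)
    intro t ht
    simpa using hB1 t ht
  have hk0 : ∀ t ≥ t₀, k t < 0 := fun t ht => by have := hkα t ht; linarith
  have hkne : ∀ t ≥ t₀, k t ≠ 0 := fun t ht => ne_of_lt (hk0 t ht)
  -- antiderivative of bb
  set Bf : ℝ → ℝ := fun t => ∫ s in t₀..t, bb s with hBfdef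
  have hBfd : ∀ t : ℝ, HasDerivAt Bf (bb t) t := by
    intro t
    exact intervalIntegral.integral_hasDerivAt_right (hbbc.intervalIntegrable _ _)
      (hbbc.stronglyMeasurableAtFilter _ _) hbbc.continuousAt
  -- the damped velocity w = u' * exp Bf
  set w : ℝ → ℝ := fun t => u' t * exp (Bf t) with hwdef
  have hwd : ∀ t ≥ t₀, HasDerivAt w ((-k t * u t) * exp (Bf t)) t := by
    intro t ht
    have h1 : HasDerivAt (fun t => u' t * exp (Bf t)) _ t := (hu'd' t ht).mul ((hBfd t).exp)
    convert h1 using 1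
    rw [hbbt t ht]
    ring
  have hw0 : w t₀ = 0 := by rw [hwdef]; simp [hu'0]
  have hucont : ContinuousOn u (Ici t₀) := fun t ht => (hud t ht).continuousAt.continuousWithinAt
  -- u stays above c/2
  have hupos : ∀ t ≥ t₀, c/2 < u t := by
    by_contra hcon
    push_neg at hcon
    obtain ⟨t₁, ht₁, hut₁⟩ := hcon
    set A : Set ℝ := {t | t₀ ≤ t ∧ u t ≤ c/2} with hA
    have hne : A.Nonempty := ⟨t₁, ht₁, hut₁⟩
    have hbdB : BddBelow A := ⟨t₀, fun x hx => hx.1⟩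
    have hAeq : A = Ici t₀ ∩ u ⁻¹' (Iic (c/2)) := by
      ext x; simp [hA, mem_Ici, mem_Iic]
    have hclosed : IsClosed A := by
      rw [hAeq]
      exact hucont.preimage_isClosed_of_isClosed isClosed_Ici isClosed_Iic
    set τ := sInf A with hτ
    have hτA : τ ∈ A := hclosed.csInf_mem hne hbdB
    have hτ0 : t₀ < τ := by
      rcases lt_or_eq_of_le hτA.1 with h | h
      · exact h
      · exfalso; have h2 := hτA.2; rw [← h, hu0] at h2; linarith
    have hlow : ∀ s, t₀ ≤ s → s < τ → c/2 < u s := by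
      intro s hs1 hs2
      by_contra hle
      push_neg at hle
      exact absurd (csInf_le hbdB ⟨hs1, hle⟩) (not_le.mpr hs2)
    have hwnn : ∀ x ∈ Icc t₀ τ, 0 ≤ w x := by
      intro x hx
      have h1 : w t₀ ≤ w x := Stmt17Aux.mono_helper hx.1
        (fun s hs => hwd s hs.1)
        (fun s hs => by
          have hs1 : t₀ ≤ s := le_of_lt hs.1
          have hus : 0 < u s := lt_trans (half_pos hc0) (hlow s hs1 (lt_of_lt_of_le hs.2 hx.2))
          have hks := hk0 s hs1
          exact mul_nonneg (mul_nonneg (by linarith) hus.le) (exp_pos _).le)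
      linarith [hw0]
    have hu'nn : ∀ x ∈ Icc t₀ τ, 0 ≤ u' x := by
      intro x hx
      have h1 := hwnn x hx
      rw [hwdef] at h1
      simp only at h1
      by_contra hneg'
      push_neg at hneg'
      nlinarith [exp_pos (Bf x)]
    have h2 : u t₀ ≤ u τ := Stmt17Aux.mono_helper hτ0.le (fun s hs => hud s hs.1)
      (fun s hs => hu'nn s (Ioo_subset_Icc_self hs))
    rw [hu0] at h2
    have h3 := hτA.2
    linarith
  -- hence u' ≥ 0 and u ≥ c everywhere
  have hu'nonneg : ∀ t ≥ t₀, 0 ≤ u' t := by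
    intro t ht
    have hwt : 0 ≤ w t := by
      have h1 : w t₀ ≤ w t := Stmt17Aux.mono_helper ht (fun s hs => hwd s hs.1)
        (fun s hs => by
          have hs1 : t₀ ≤ s := hs.1.le
          have hus : 0 < u s := lt_trans (half_pos hc0) (hupos s hs1)
          have hks := hk0 s hs1
          exact mul_nonneg (mul_nonneg (by linarith) hus.le) (exp_pos _).le)
      linarith [hw0]
    rw [hwdef] at hwt
    simp only at hwt
    by_contra hneg'
    push_neg at hneg'
    nlinarith [exp_pos (Bf t)]
  have humono : ∀ s t, t₀ ≤ s → s ≤ t → u s ≤ u t := by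
    intro s t hs hst
    exact Stmt17Aux.mono_helper hst (fun x hx => hud x (le_trans hs hx.1))
      (fun x hx => hu'nonneg x (le_trans hs hx.1.le))
  have hc_le_u : ∀ t ≥ t₀, c ≤ u t := by
    intro t ht
    have := humono t₀ t le_rfl ht
    rwa [hu0] at this
  -- the monotone quantity R
  set R : ℝ → ℝ := fun t => u t^2 + u' t^2 / k t with hRdef
  set R' : ℝ → ℝ := fun t => -(k' t + 2*b t * k t) * u' t^2 / (k t)^2 with hR'def
  have hRd : ∀ t ≥ t₀, HasDerivAt R (R' t) t := by
    intro t ht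
    have h1 : HasDerivAt (fun t => u t ^ 2) _ t := (hud t ht).pow 2
    have h2 : HasDerivAt (fun t => u' t ^ 2 / k t) _ t := ((hu'd' t ht).pow 2).div (hk t ht) (hkne t ht)
    have h3 : HasDerivAt (fun t => u t ^ 2 + u' t ^ 2 / k t) _ t := h1.add h2
    rw [hRdef, hR'def]
    simp only
    convert h3 using 1
    have hne := hkne t ht
    field_simp
    simp only [Pi.pow_apply]; ring
  have hR'nn : ∀ t ≥ t₀, 0 ≤ R' t := by
    intro t ht
    rw [hR'def]
    simp only
    apply div_nonneg _ (sq_nonneg _)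
    apply mul_nonneg _ (sq_nonneg _)
    linarith [hneg t ht]
  have hRmono : ∀ s t, t₀ ≤ s → s ≤ t → R s ≤ R t := fun s t hs hst =>
    Stmt17Aux.mono_helper hst (fun x hx => hRd x (le_trans hs hx.1))
      (fun x hx => hR'nn x (le_trans hs hx.1.le))
  have hR0 : R t₀ = c^2 := by rw [hRdef]; simp [hu0, hu'0]
  have hRge : ∀ t ≥ t₀, c^2 ≤ R t := by
    intro t ht
    rw [← hR0]
    exact hRmono t₀ t le_rfl ht
  have hRle : ∀ t ≥ t₀, R t ≤ 1 := by
    intro t ht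
    rw [hRdef]
    simp only
    have h1 : u' t^2 / k t ≤ 0 := div_nonpos_of_nonneg_of_nonpos (sq_nonneg _) (hk0 t ht).le
    nlinarith [hbound t ht, sq_nonneg (u' t)]
  -- v = u'/u
  have hune : ∀ t ≥ t₀, u t ≠ 0 := fun t ht => ne_of_gt (lt_of_lt_of_le hc0 (hc_le_u t ht))
  set v : ℝ → ℝ := fun t => u' t / u t with hvdef
  have hvd : ∀ t ≥ t₀, HasDerivAt v (-k t - b t * v t - v t^2) t := by
    intro t ht
    have h1 : HasDerivAt (fun t => u' t / u t) _ t := (hu'd' t ht).div (hud t ht) (hune t ht)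
    rw [hvdef]
    simp only
    convert h1 using 1
    have hne := hune t ht
    field_simp
    ring
  have hvnn : ∀ t ≥ t₀, 0 ≤ v t := fun t ht =>
    div_nonneg (hu'nonneg t ht) (le_of_lt (lt_of_lt_of_le hc0 (hc_le_u t ht)))
  have hvle : ∀ t ≥ t₀, v t ≤ 1/c := by
    intro t ht
    rw [hvdef]
    simp only
    have hu1 : u' t ≤ 1 := by nlinarith [hbound t ht, sq_nonneg (u t), sq_nonneg (u' t - 1)]
    have huc : c ≤ u t := hc_le_u t ht
    rw [div_le_div_iff₀ (by linarith) hc0]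
    nlinarith [hu'nonneg t ht]
  have hu'eq : ∀ t ≥ t₀, u' t = v t * u t := by
    intro t ht
    rw [hvdef]
    simp only
    exact (div_mul_cancel₀ _ (hune t ht)).symm
  have hkey : ∀ t ≥ t₀, α * c^2 ≤ -k t - v t^2 := by
    intro t ht
    have hRt := hRge t ht
    rw [hRdef] at hRt
    simp only at hRt
    have hK := hk0 t ht
    have huc := hc_le_u t ht
    have hupos' : 0 < u t := lt_of_lt_of_le hc0 huc
    have hu2 : u t^2 ≤ 1 := by nlinarith [hbound t ht, sq_nonneg (u' t)]
    have hα' := hkα t ht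
    rw [hvdef]
    simp only
    rw [show (u' t / u t)^2 = u' t^2 / u t^2 from div_pow _ _ _]
    have h2 : (-k t) * c^2 ≤ (-k t) * (u t^2 + u' t^2 / k t) :=
      mul_le_mul_of_nonneg_left hRt (by linarith)
    have e1 : (-k t) * (u' t^2/k t) = - u' t^2 := by
      rw [neg_mul, mul_div_cancel₀ _ (hkne t ht)]
    rw [mul_add, e1] at h2
    have h4 : α*c^2*u t^2 ≤ α*c^2 := mul_le_of_le_one_right (by positivity) hu2
    have h5 : α*c^2 ≤ (-k t)*c^2 := mul_le_mul_of_nonneg_right hα' (sq_nonneg c)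
    have h3 : u' t^2/u t^2 ≤ -k t - α*c^2 := by
      rw [div_le_iff₀ (by positivity : (0:ℝ) < u t^2)]
      have h6 : (-k t - α*c^2) * u t^2 = (-k t)*u t^2 - α*c^2*u t^2 := by ring
      linarith [h2, h4, h5, h6]
    linarith
  -- constants
  have hκ0 : 0 < α * c^2 := by positivity
  set κ : ℝ := α * c^2 with hκdef
  set γ : ℝ := 1/(κ * α₃ * c^2) with hγdef
  have hγ0 : 0 < γ := by positivity
  set η : ℝ := κ/(2*γ) with hηdef
  have hη0 : 0 < η := by positivity
  -- tail time for R
  obtain ⟨T₁, hT₁t₃, hT₁tail⟩ : ∃ T₁ ≥ t₃, ∀ T ≥ T₁, R T - R T₁ ≤ η := by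
    have hbddA : BddAbove (R '' Ici t₀) := ⟨1, by rintro y ⟨x, hx, rfl⟩; exact hRle x hx⟩
    have hneA : (R '' Ici t₀).Nonempty := ⟨R t₀, t₀, self_mem_Ici, rfl⟩
    obtain ⟨y, hy, hylt⟩ := exists_lt_of_lt_csSup hneA
      (show sSup (R '' Ici t₀) - η < sSup (R '' Ici t₀) by linarith)
    obtain ⟨T₀', hT₀', rfl⟩ := hy
    refine ⟨max T₀' t₃, le_max_right _ _, fun T hT => ?_⟩
    have hTt₀ : t₀ ≤ T := le_trans ht₃ (le_trans (le_max_right T₀' t₃) hT)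
    have h1 : R T ≤ sSup (R '' Ici t₀) := le_csSup hbddA ⟨T, hTt₀, rfl⟩
    have h2 : R T₀' ≤ R (max T₀' t₃) := hRmono T₀' _ hT₀' (le_max_left _ _)
    linarith
  have hT₁t₀ : t₀ ≤ T₁ := le_trans ht₃ hT₁t₃
  have hT₁pos : 0 < T₁ := lt_of_lt_of_le ht₀ hT₁t₀
  set T : ℝ := max (4*T₁) (8/(κ*c)) with hTdef
  have hT4 : 4*T₁ ≤ T := le_max_left _ _
  have hT8 : 8/(κ*c) ≤ T := le_max_right _ _
  have hTT₁ : T₁ ≤ T := le_trans (by linarith) hT4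
  have hTpos : 0 < T := lt_of_lt_of_le hT₁pos hTT₁
  set A : ℝ := γ * T with hAdef
  have hA0 : 0 < A := by positivity
  -- the comparison function F
  set F : ℝ → ℝ := fun t => v t - κ*t + (A/2)*R t + t^2/(4*A*α₃*c^2) with hFdef
  set F' : ℝ → ℝ := fun t => (-k t - b t * v t - v t^2) - κ + (A/2)*R' t + 2*t/(4*A*α₃*c^2)
    with hF'def
  have hFd : ∀ t ≥ t₀, HasDerivAt F (F' t) t := by
    intro t ht
    have h1 := hvd t ht
    have h2 : HasDerivAt (fun t : ℝ => κ*t) κ t := by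
      simpa using (hasDerivAt_id t).const_mul κ
    have h3 : HasDerivAt (fun t : ℝ => (A/2)*R t) ((A/2)*R' t) t := (hRd t ht).const_mul (A/2)
    have h4 : HasDerivAt (fun t : ℝ => t^2/(4*A*α₃*c^2)) (2*t/(4*A*α₃*c^2)) t := by
      have h5 := (hasDerivAt_pow 2 t).div_const (4*A*α₃*c^2)
      simpa using h5
    have h6 := ((h1.sub h2).add h3).add h4
    rw [hFdef, hF'def]
    exact h6
  have hF'nn : ∀ t ∈ Ioo T₁ T, 0 ≤ F' t := by
    intro t ht
    have htt₀ : t₀ ≤ t := le_trans hT₁t₀ ht.1.le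
    have htt₃ : t₃ ≤ t := le_trans hT₁t₃ ht.1.le
    have ht0 : 0 < t := lt_of_lt_of_le ht₀ htt₀
    have e1 : κ ≤ -k t - v t^2 := hkey t htt₀
    have e2 : α₃/t * b t^2 * u' t^2 ≤ R' t := by
      have hr := hrate t htt₃
      have hk2 : (0:ℝ) < k t^2 := by
        have h7 := hkne t htt₀
        positivity
      rw [hR'def]
      simp only
      have step : α₃/t * b t^2 * u' t^2 = (α₃/t * b t^2 * k t^2) * (u' t^2 / k t^2) := by
        field_simp [hkne t htt₀]
      rw [step]
      calc (α₃/t * b t^2 * k t^2) * (u' t^2 / k t^2)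
          ≤ (-k' t - 2*b t*k t) * (u' t^2 / k t^2) :=
            mul_le_mul_of_nonneg_right hr (by positivity)
        _ = -(k' t + 2*b t*k t) * u' t^2 / k t^2 := by ring
    have e3 : v t^2 * c^2 ≤ u' t^2 := by
      rw [hu'eq t htt₀, mul_pow]
      have huc := hc_le_u t htt₀
      have h8 : c^2 ≤ u t^2 := by nlinarith
      nlinarith [sq_nonneg (v t)]
    have e5 : (A*α₃*c^2/(2*t)) * (b t*v t)^2 ≤ (A/2)*R' t := by
      calc (A*α₃*c^2/(2*t)) * (b t*v t)^2
          = (A/2)*(α₃/t * b t^2 * (v t^2 * c^2)) := by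
            field_simp
        _ ≤ (A/2)*(α₃/t * b t^2 * u' t^2) := by
            apply mul_le_mul_of_nonneg_left _ (by positivity)
            apply mul_le_mul_of_nonneg_left e3 (by positivity)
        _ ≤ (A/2)*R' t := mul_le_mul_of_nonneg_left e2 (by positivity)
    have e4 : 0 ≤ (A*α₃*c^2/(2*t)) * (b t*v t)^2 + t/(2*A*α₃*c^2) - b t*v t := by
      have expand : (A*α₃*c^2/(2*t)) * (b t*v t)^2 + t/(2*A*α₃*c^2) - b t*v t
          = (A*α₃*c^2*(b t*v t) - t)^2 / (2*t*(A*α₃*c^2)) := by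
        field_simp
        ring
      rw [expand]
      positivity
    have e6 : 2*t/(4*A*α₃*c^2) = t/(2*A*α₃*c^2) := by ring
    rw [hF'def]
    simp only
    linarith [e1, e4, e5, e6]
  -- monotonicity of F and the contradiction
  have hmono : F T₁ ≤ F T := Stmt17Aux.mono_helper hTT₁
    (fun t ht => hFd t (le_trans hT₁t₀ ht.1)) hF'nn
  rw [hFdef] at hmono
  simp only at hmono
  have hRT : R T - R T₁ ≤ η := hT₁tail T hTT₁
  have hvT₁ : 0 ≤ v T₁ := hvnn T₁ hT₁t₀
  have hvT : v T ≤ 1/c := hvle T (le_trans hT₁t₀ hTT₁)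
  have hprod : (A/2)*R T - (A/2)*R T₁ ≤ κ*T/4 := by
    have h9 : (A/2)*R T - (A/2)*R T₁ = (A/2)*(R T - R T₁) := by ring
    have h10 : (A/2)*(R T - R T₁) ≤ (A/2)*η := mul_le_mul_of_nonneg_left hRT (by positivity)
    have h11 : (A/2)*η = κ*T/4 := by
      rw [hAdef, hηdef]
      field_simp
      ring
    linarith
  have hTq : T^2/(4*A*α₃*c^2) = κ*T/4 := by
    rw [hAdef, hγdef, hκdef]
    field_simp
  have hT₁q : 0 ≤ T₁^2/(4*A*α₃*c^2) := by positivity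
  have hκT₁ : κ*T₁ ≤ κ*T/4 := by
    have := mul_le_mul_of_nonneg_left hT4 hκ0.le
    linarith
  have hTlow : 2/c ≤ κ*T/4 := by
    have h12 := mul_le_mul_of_nonneg_left hT8 hκ0.le
    have h13 : κ*(8/(κ*c)) = 4*(2/c) := by
      rw [hκdef]
      field_simp
      ring
    linarith
  have hfinal : 2/c ≤ v T := by
    -- from hmono : v T₁ - κ*T₁ + (A/2)*R T₁ + T₁^2/(4Aα₃c²) ≤ v T - κ*T + (A/2)*R T + T^2/(4Aα₃c²)
    have h14 : v T ≥ κ*T - κ*T₁ - (A/2)*R T + (A/2)*R T₁ - T^2/(4*A*α₃*c^2) + T₁^2/(4*A*α₃*c^2)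
        + v T₁ := by linarith [hmono]
    -- ≥ κT - κT/4 - κT/4 - κT/4 = κT/4 ≥ (8/c)/4 = 2/c
    linarith [h14, hprod, hκT₁, hT₁q, hTq, hTlow, hvT₁]
  have h15 : 0 < 1/c := by positivity
  have h16 : 2/c ≤ 1/c := le_trans hfinal hvT
  rw [div_le_div_iff₀ hc0 hc0] at h16
  nlinarith
end

section
/- If b, k are continuous, k nondecreasing and nonpositive on [t₀, ∞), b(t) > 0, 1/b(t) + k(t) ≥ M, and (d/dt)e^{1/b + k} ≤ -(e^{1/b+k} - k)²/(2b), then b'(t) ≥ b(t)/2 for all t ≥ t₀, and consequently b(t) ≥ b(t₀) e^{(t-t₀)/2}. -/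
open Set Real MeasureTheory Filter

theorem stmt_19 (t₀ M : ℝ) (b b' k k' E' : ℝ → ℝ)
    (hbd : ∀ t ≥ t₀, HasDerivAt b (b' t) t)
    (hb'c : ContinuousOn b' (Ici t₀))
    (hkd : ∀ t ≥ t₀, HasDerivAt k (k' t) t)
    (hk'c : ContinuousOn k' (Ici t₀))
    (hkmono : MonotoneOn k (Ici t₀))
    (hkneg : ∀ t ≥ t₀, k t ≤ 0)
    (hbpos : ∀ t ≥ t₀, 0 < b t)
    (hM : ∀ t ≥ t₀, M ≤ 1 / b t + k t)
    (hE : ∀ t ≥ t₀, HasDerivAt (fun s => Real.exp (1 / b s + k s)) (E' t) t)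
    (hE' : ∀ t ≥ t₀, E' t ≤ -(Real.exp (1 / b t + k t) - k t) ^ 2 / (2 * b t)) :
    (∀ t ≥ t₀, b t / 2 ≤ b' t)
    ∧ ∀ t ≥ t₀, b t₀ * Real.exp ((t - t₀) / 2) ≤ b t := by
  -- k' is nonnegative on [t₀, ∞) since k is monotone there
  have hk'nonneg : ∀ t ≥ t₀, 0 ≤ k' t := by
    intro t ht
    have h1 : Tendsto (slope k t) (nhdsWithin t (Ioi t)) (nhds (k' t)) :=
      (hasDerivAt_iff_tendsto_slope.mp (hkd t ht)).mono_left
        (nhdsWithin_mono _ (fun s hs => ne_of_gt hs))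
    refine ge_of_tendsto h1 ?_
    filter_upwards [self_mem_nhdsWithin] with s hs
    have hst : t < s := hs
    have hks : k t ≤ k s := hkmono ht (le_trans ht hst.le) hst.le
    have : 0 ≤ (k s - k t) / (s - t) := div_nonneg (by linarith) (by linarith)
    simpa [slope_def_field] using this
  have h1 : ∀ t ≥ t₀, b t / 2 ≤ b' t := by
    intro t ht
    have hb := hbpos t ht
    have hinv : HasDerivAt (fun s => 1 / b s) (-b' t / b t ^ 2) t := by
      have h := (hbd t ht).inv (ne_of_gt hb)
      simp only [one_div]
      exact h
    have hcomp : HasDerivAt (fun s => Real.exp (1 / b s + k s))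
        (Real.exp (1 / b t + k t) * (-b' t / b t ^ 2 + k' t)) t :=
      (hinv.add (hkd t ht)).exp
    have heq : E' t = Real.exp (1 / b t + k t) * (-b' t / b t ^ 2 + k' t) :=
      (hE t ht).unique hcomp
    set E := Real.exp (1 / b t + k t) with hEdef
    have hEpos : 0 < E := Real.exp_pos _
    have hEK1 : 1 ≤ E - k t := by
      have hexp := Real.add_one_le_exp (1 / b t + k t)
      have hbinv : 0 < 1 / b t := by positivity
      rw [hEdef]
      linarith
    have hEsq : E ≤ (E - k t) ^ 2 := by
      rcases le_total E 1 with h | h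
      · nlinarith
      · nlinarith [hkneg t ht]
    have hkey := hE' t ht
    rw [heq] at hkey
    have hkey' : E * (-b' t / b t ^ 2 + k' t) * (2 * b t ^ 2) ≤
        (-(E - k t) ^ 2 / (2 * b t)) * (2 * b t ^ 2) :=
      mul_le_mul_of_nonneg_right hkey (by positivity)
    have hL : E * (-b' t / b t ^ 2 + k' t) * (2 * b t ^ 2)
        = -2 * E * b' t + 2 * b t ^ 2 * E * k' t := by
      field_simp
    have hR : (-(E - k t) ^ 2 / (2 * b t)) * (2 * b t ^ 2)
        = -(E - k t) ^ 2 * b t := by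
      field_simp
    rw [hL, hR] at hkey'
    have hk'n := hk'nonneg t ht
    nlinarith [mul_le_mul_of_nonneg_right hEsq hb.le,
      mul_nonneg (mul_nonneg (sq_nonneg (b t)) hEpos.le) hk'n, hEpos, hb]
  refine ⟨h1, ?_⟩
  -- Gronwall: f t = b t * exp (-(t - t₀)/2) is monotone on Ici t₀
  set f : ℝ → ℝ := fun s => b s * Real.exp (-((s - t₀) / 2)) with hfdef
  have hfd : ∀ t ≥ t₀, HasDerivAt f
      (b' t * Real.exp (-((t - t₀) / 2)) +
        b t * (Real.exp (-((t - t₀) / 2)) * -(1 / 2))) t := by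
    intro t ht
    have he : HasDerivAt (fun s => Real.exp (-((s - t₀) / 2)))
        (Real.exp (-((t - t₀) / 2)) * -(1 / 2)) t := by
      have : HasDerivAt (fun s : ℝ => -((s - t₀) / 2)) (-(1 / 2)) t := by
        exact (((hasDerivAt_id t).sub_const t₀).div_const 2).neg
      simpa using this.exp
    exact (hbd t ht).mul he
  have hfmono : MonotoneOn f (Ici t₀) := by
    have hcont : ContinuousOn f (Ici t₀) := fun t ht =>
      ((hfd t ht).continuousAt.continuousWithinAt)
    refine monotoneOn_of_deriv_nonneg (convex_Ici t₀) hcont ?_ ?_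
    · intro t ht
      rw [interior_Ici] at ht
      exact ((hfd t (le_of_lt ht)).differentiableAt).differentiableWithinAt
    · intro t ht
      rw [interior_Ici] at ht
      rw [(hfd t (le_of_lt ht)).deriv]
      have hb2 := h1 t ht.le
      have hep : (0:ℝ) < Real.exp (-((t - t₀) / 2)) := Real.exp_pos _
      nlinarith
  intro t ht
  have hft : f t₀ ≤ f t := hfmono self_mem_Ici ht ht
  have hft0 : f t₀ = b t₀ := by simp [hfdef]
  rw [hft0] at hft
  have := mul_le_mul_of_nonneg_right hft (Real.exp_pos ((t - t₀) / 2)).le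
  calc b t₀ * Real.exp ((t - t₀) / 2) ≤ f t * Real.exp ((t - t₀) / 2) := this
    _ = b t * Real.exp (-((t - t₀) / 2) + (t - t₀) / 2) := by
        rw [Real.exp_add]; ring
    _ = b t := by simp
end
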